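/- arXiv:1803.01332 — 4 statements merged into one kernel-verified Lean document; each statement's English description precedes it below -/
import Mathlib

section
/- Let X be a normal Hausdorff space, let F be a cusco map from X to ℝ whose value F(x) is a singleton at every isolated point x of X, and let W₁, …, Wₙ be open subsets of X × ℝ such that the graph of F is contained in W₁ ∪ … ∪ Wₙ and the graph of F meets each Wₖ. Then there exists a continuous function g : X → ℝ whose graph is contained in W₁ ∪ … ∪ Wₙ and meets each Wₖ. -/
open Set Topology TopologicalSpace

/-- The set of values of a set-valued map (identified with its graph) at a point. -/
def valuesAt {X : Type*} (F : Set (X × ℝ)) (x : X) : Set ℝ := {y | (x, y) ∈ F}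

/-- A set-valued map (identified with its graph) is cusco: upper semicontinuous at every
point, with nonempty compact convex values. -/
def IsCusco {X : Type*} [TopologicalSpace X] (F : Set (X × ℝ)) : Prop :=
  (∀ x : X, ∀ V : Set ℝ, IsOpen V → valuesAt F x ⊆ V →
    ∃ U : Set X, IsOpen U ∧ x ∈ U ∧ ∀ u ∈ U, valuesAt F u ⊆ V) ∧
  (∀ x : X, (valuesAt F x).Nonempty ∧ IsCompact (valuesAt F x) ∧ Convex ℝ (valuesAt F x))

/-- A minimal cusco map, i.e. a cusco map containing no proper cusco submap. -/
def IsMinimalCusco {X : Type*} [TopologicalSpace X] (F : Set (X × ℝ)) : Prop :=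
  IsCusco F ∧ ∀ G : Set (X × ℝ), IsCusco G → G ⊆ F → G = F

/-- `L(X)`: all cusco maps from `X` to `ℝ`. -/
def LSet (X : Type*) [TopologicalSpace X] : Set (Set (X × ℝ)) := {F | IsCusco F}

/-- `L₀(X)`: cusco maps that are single-valued at each isolated point. -/
def L0Set (X : Type*) [TopologicalSpace X] : Set (Set (X × ℝ)) :=
  {F | IsCusco F ∧ ∀ x : X, IsOpen ({x} : Set X) → ∃ y : ℝ, valuesAt F x = {y}}

/-- `MC(X)`: all minimal cusco maps from `X` to `ℝ`. -/
def MCSet (X : Type*) [TopologicalSpace X] : Set (Set (X × ℝ)) := {F | IsMinimalCusco F}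

/-- The upper Vietoris topology on a family of subsets of `X × ℝ`. -/
def upperVietoris {X : Type*} [TopologicalSpace X] (S : Set (Set (X × ℝ))) :
    TopologicalSpace S :=
  .generateFrom {U | ∃ W : Set (X × ℝ), IsOpen W ∧ U = {A : S | (A : Set (X × ℝ)) ⊆ W}}

/-- The Vietoris topology on a family of subsets of `X × ℝ`. -/
def vietoris {X : Type*} [TopologicalSpace X] (S : Set (Set (X × ℝ))) :
    TopologicalSpace S :=
  .generateFrom
    ({U | ∃ W : Set (X × ℝ), IsOpen W ∧ U = {A : S | (A : Set (X × ℝ)) ⊆ W}} ∪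
     {U | ∃ W : Set (X × ℝ), IsOpen W ∧ U = {A : S | ((A : Set (X × ℝ)) ∩ W).Nonempty}})

/-- The graph of a function `X → ℝ`. -/
def graphOf {X : Type*} (f : X → ℝ) : Set (X × ℝ) := {p | p.2 = f p.1}

/-- `X` is countably compact: every countable open cover has a finite subcover. -/
def CountablyCompact (X : Type*) [TopologicalSpace X] : Prop :=
  ∀ U : ℕ → Set X, (∀ n, IsOpen (U n)) → (⋃ n, U n) = Set.univ →
    ∃ t : Finset ℕ, (⋃ n ∈ t, U n) = Set.univ

section Auxiliary
open Filter
set_option linter.unusedSectionVars false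
variable {X : Type*} [TopologicalSpace X]

variable {X : Type*} [TopologicalSpace X]

lemma usc_sub_cont {f s : X → ℝ} (hf : UpperSemicontinuous f) (hs : Continuous s) :
    UpperSemicontinuous (fun x => f x - s x) := by
  intro x y hy
  have hy' : f x - s x < y := hy
  set m := (f x + (y + s x)) / 2 with hm
  have h1 : f x < m := by simp only [hm]; linarith
  have h2 : m - s x < y := by simp only [hm]; linarith
  filter_upwards [hf x m h1,
    hs.continuousAt (x := x) (Ioi_mem_nhds (show m - y < s x by linarith))] with x' hx1 hx2
  have hx2' : m - y < s x' := hx2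
  show f x' - s x' < y
  linarith

lemma lsc_sub_cont {f s : X → ℝ} (hf : LowerSemicontinuous f) (hs : Continuous s) :
    LowerSemicontinuous (fun x => f x - s x) := by
  intro x y hy
  have hy' : y < f x - s x := hy
  set m := (f x + (y + s x)) / 2 with hm
  have h1 : m < f x := by simp only [hm]; linarith
  have h2 : y < m - s x := by simp only [hm]; linarith
  filter_upwards [hf x m h1,
    hs.continuousAt (x := x) (Iio_mem_nhds (show s x < m - y by linarith))] with x' hx1 hx2
  have hx2' : s x' < m - y := hx2
  show y < f x' - s x'
  linarith

lemma isOpen_usc_lt_cont {l c : X → ℝ} (hl : UpperSemicontinuous l) (hc : Continuous c) :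
    IsOpen {x | l x < c x} := by
  have : {x | l x < c x} = {x | (fun x => l x - c x) x < 0} := by ext x; simp only [mem_setOf_eq]; constructor <;> intro <;> linarith
  rw [this]
  exact (usc_sub_cont hl hc).isOpen_preimage 0

lemma isOpen_cont_lt_lsc {u c : X → ℝ} (hu : LowerSemicontinuous u) (hc : Continuous c) :
    IsOpen {x | c x < u x} := by
  have : {x | c x < u x} = {x | (0:ℝ) < (fun x => u x - c x) x} := by ext x; simp only [mem_setOf_eq]; constructor <;> intro <;> linarith
  rw [this]
  exact (lsc_sub_cont hu hc).isOpen_preimage 0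

variable {X : Type*} [TopologicalSpace X]

lemma kt_step [NormalSpace X] {f g : X → ℝ} (hf : UpperSemicontinuous f)
    (hg : LowerSemicontinuous g) (hfg : ∀ x, f x ≤ g x) {c : ℝ} (hc : 0 < c)
    (hfc : ∀ x, f x ≤ c) (hgc : ∀ x, -c ≤ g x) :
    ∃ h : X → ℝ, Continuous h ∧ (∀ x, |h x| ≤ c / 3) ∧
      (∀ x, f x - h x ≤ 2 / 3 * c) ∧ (∀ x, -(2 / 3 * c) ≤ g x - h x) := by
  set A : Set X := {x | c / 3 ≤ f x} with hA
  set B : Set X := {x | g x ≤ -(c / 3)} with hB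
  have hAclosed : IsClosed A := by
    have : A = (f ⁻¹' Iio (c / 3))ᶜ := by
      ext x; simp [hA, not_lt]
    rw [this]; exact (hf.isOpen_preimage _).isClosed_compl
  have hBclosed : IsClosed B := by
    have : B = (g ⁻¹' Ioi (-(c / 3)))ᶜ := by
      ext x; simp [hB, not_lt]
    rw [this]; exact (hg.isOpen_preimage _).isClosed_compl
  have hd : Disjoint A B := by
    rw [Set.disjoint_left]
    intro x hxA hxB
    simp only [hA, hB, mem_setOf_eq] at hxA hxB
    have := hfg x; linarith
  obtain ⟨φ, hφA, hφB, hφ01⟩ := exists_continuous_zero_one_of_isClosed hAclosed hBclosed hd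
  refine ⟨fun x => c / 3 - 2 * c / 3 * φ x, by continuity, ?_, ?_, ?_⟩
  · intro x
    have := (hφ01 x).1; have := (hφ01 x).2
    rw [abs_le]; constructor <;> nlinarith
  · intro x
    by_cases hx : x ∈ A
    · have h0 : φ x = 0 := hφA hx
      show f x - (c / 3 - 2 * c / 3 * φ x) ≤ 2 / 3 * c
      rw [h0]; have := hfc x; ring_nf; linarith
    · have h1 : f x < c / 3 := by simpa [hA, not_le] using hx
      have := (hφ01 x).2; have h0 := (hφ01 x).1
      show f x - (c / 3 - 2 * c / 3 * φ x) ≤ 2 / 3 * c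
      nlinarith
  · intro x
    by_cases hx : x ∈ B
    · have h0 : φ x = 1 := hφB hx
      show -(2 / 3 * c) ≤ g x - (c / 3 - 2 * c / 3 * φ x)
      rw [h0]; have := hgc x; ring_nf; linarith
    · have h1 : -(c / 3) < g x := by simpa [hB, not_le] using hx
      have := (hφ01 x).2; have h0 := (hφ01 x).1
      show -(2 / 3 * c) ≤ g x - (c / 3 - 2 * c / 3 * φ x)
      nlinarith

variable {X : Type*} [TopologicalSpace X]

lemma katetov_tong [NormalSpace X] {f g : X → ℝ} (hf : UpperSemicontinuous f)
    (hg : LowerSemicontinuous g) (hfg : ∀ x, f x ≤ g x) {C : ℝ} (hC : 0 < C)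
    (hfC : ∀ x, f x ≤ C) (hgC : ∀ x, -C ≤ g x) :
    ∃ h : X → ℝ, Continuous h ∧ ∀ x, f x ≤ h x ∧ h x ≤ g x := by
  set c : ℕ → ℝ := fun n => C * (2/3)^n with hc
  have hcpos : ∀ n, 0 < c n := fun n => mul_pos hC (pow_pos (by norm_num) n)
  have hcsucc : ∀ n, c (n+1) = 2/3 * c n := by
    intro n; simp only [hc, pow_succ]; ring
  let M : ℕ → Type _ := fun n => {s : X → ℝ // Continuous s ∧
     (∀ x, f x - s x ≤ c n) ∧ (∀ x, -(c n) ≤ g x - s x)}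
  have step : ∀ n (p : M n), {q : M (n+1) // ∀ x, |q.1 x - p.1 x| ≤ c n / 3} := by
    intro n p
    have husc : UpperSemicontinuous (fun x => f x - p.1 x) := usc_sub_cont hf p.2.1
    have hlsc : LowerSemicontinuous (fun x => g x - p.1 x) := lsc_sub_cont hg p.2.1
    have hfg' : ∀ x, f x - p.1 x ≤ g x - p.1 x := fun x => by have := hfg x; linarith
    have hex := kt_step husc hlsc hfg' (hcpos n) p.2.2.1 p.2.2.2
    set h := Classical.choose hex with hh
    obtain ⟨hcont, hbd, hu1, hu2⟩ := Classical.choose_spec hex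
    refine ⟨⟨fun x => p.1 x + h x, p.2.1.add hcont, ?_, ?_⟩, ?_⟩
    · intro x; rw [hcsucc n]
      have := hu1 x; linarith
    · intro x; rw [hcsucc n]
      have := hu2 x; linarith
    · intro x
      simpa using hbd x
  let S : ∀ n, M n := fun n => Nat.rec
    ⟨fun _ => (0:ℝ), continuous_const, fun x => by simpa [hc] using hfC x,
      fun x => by simpa [hc] using hgC x⟩
    (fun n Sn => (step n Sn).1) n
  have hSsucc : ∀ n, S (n+1) = (step n (S n)).1 := fun n => rfl
  have hS0 : ∀ x, (S 0).1 x = 0 := fun x => rfl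
  have hinc : ∀ n x, |(S (n+1)).1 x - (S n).1 x| ≤ c n / 3 := by
    intro n x
    have := (step n (S n)).2 x
    rwa [← hSsucc n] at this
  set d : ℕ → X → ℝ := fun n x => (S (n+1)).1 x - (S n).1 x with hd
  have hdc : ∀ n, Continuous (d n) := fun n => ((S (n+1)).2.1).sub ((S n).2.1)
  have hu : Summable (fun n => c n / 3) := by
    have : Summable (fun n : ℕ => (2/3:ℝ)^n) :=
      summable_geometric_of_lt_one (by norm_num) (by norm_num)
    simpa [hc, mul_div_assoc] using (this.mul_left (C/3)).congr (fun n => by ring)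
  have hdb : ∀ n x, ‖d n x‖ ≤ c n / 3 := by
    intro n x; rw [Real.norm_eq_abs]; exact hinc n x
  set h : X → ℝ := fun x => ∑' n, d n x with hhdef
  have hhc : Continuous h := continuous_tsum hdc hu hdb
  have hsumx : ∀ x, Summable (fun n => d n x) := by
    intro x
    exact Summable.of_norm_bounded hu (fun n => hdb n x)
  have hTend : ∀ x, Tendsto (fun n => (S n).1 x) atTop (𝓝 (h x)) := by
    intro x
    have h1 := (hsumx x).hasSum.tendsto_sum_nat
    have h2 : ∀ n, ∑ i ∈ Finset.range n, d i x = (S n).1 x := by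
      intro n
      rw [show (S n).1 x = (S n).1 x - (S 0).1 x by rw [hS0]; ring]
      exact Finset.sum_range_sub (fun i => (S i).1 x) n
    simpa [h2] using h1
  have hc0 : Tendsto c atTop (𝓝 0) := by
    rw [hc]
    simpa using (tendsto_pow_atTop_nhds_zero_of_lt_one (by norm_num : (0:ℝ) ≤ 2/3)
      (by norm_num)).const_mul C
  refine ⟨h, hhc, fun x => ⟨?_, ?_⟩⟩
  · have lim : Tendsto (fun n => (S n).1 x + c n) atTop (𝓝 (h x + 0)) :=
      (hTend x).add hc0
    rw [add_zero] at lim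
    exact ge_of_tendsto' lim (fun n => by have := (S n).2.2.1 x; linarith)
  · have lim : Tendsto (fun n => (S n).1 x - c n) atTop (𝓝 (h x - 0)) :=
      (hTend x).sub hc0
    rw [sub_zero] at lim
    exact le_of_tendsto' lim (fun n => by have := (S n).2.2.2 x; linarith)

variable {X : Type*} [TopologicalSpace X]

theorem valuesAt_open (U : Set (X × ℝ)) (hUopen : IsOpen U) (x : X) :
    IsOpen (valuesAt U x) := by
  have : valuesAt U x = (fun y => (x, y)) ⁻¹' U := rfl
  rw [this]
  exact hUopen.preimage (Continuous.prodMk_right x)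

-- Main structural lemma, packaged
theorem cusco_structure [T2Space X] [NormalSpace X] (F : Set (X × ℝ)) (hF : IsCusco F)
    (U : Set (X × ℝ)) (hUopen : IsOpen U) (hFU : F ⊆ U)
    (hUbdd : ∀ p ∈ U, p.2 ∈ Ioo (-1:ℝ) 1) :
    ∃ a b u l : X → ℝ,
      (∀ x, valuesAt F x = Icc (a x) (b x)) ∧
      (∀ x, a x ≤ b x) ∧
      (∀ x, a x ∈ Ioo (-1:ℝ) 1) ∧ (∀ x, b x ∈ Ioo (-1:ℝ) 1) ∧
      LowerSemicontinuous a ∧ UpperSemicontinuous b ∧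
      LowerSemicontinuous u ∧ UpperSemicontinuous l ∧
      (∀ x, b x < u x) ∧ (∀ x, l x < a x) ∧
      (∀ x, Ico (a x) (u x) ⊆ valuesAt U x) ∧
      (∀ x, Ioc (l x) (b x) ⊆ valuesAt U x) := by
  obtain ⟨husc, hval⟩ := hF
  have hne : ∀ x, (valuesAt F x).Nonempty := fun x => (hval x).1
  have hcpt : ∀ x, IsCompact (valuesAt F x) := fun x => (hval x).2.1
  have hcvx : ∀ x, Convex ℝ (valuesAt F x) := fun x => (hval x).2.2
  have hFUv : ∀ x, valuesAt F x ⊆ valuesAt U x := fun x y hy => hFU hy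
  have hsliceo : ∀ x, IsOpen (valuesAt U x) := fun x => valuesAt_open U hUopen x
  set a : X → ℝ := fun x => sInf (valuesAt F x) with ha
  set b : X → ℝ := fun x => sSup (valuesAt F x) with hb
  have haMem : ∀ x, a x ∈ valuesAt F x := fun x => (hcpt x).sInf_mem (hne x)
  have hbMem : ∀ x, b x ∈ valuesAt F x := fun x => (hcpt x).sSup_mem (hne x)
  have hbddA : ∀ x, BddAbove (valuesAt F x) := fun x => (hcpt x).bddAbove
  have hbddB : ∀ x, BddBelow (valuesAt F x) := fun x => (hcpt x).bddBelow
  have hab : ∀ x, a x ≤ b x := fun x => le_csSup (hbddA x) (haMem x)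
  have hIcc : ∀ x, valuesAt F x = Icc (a x) (b x) := by
    intro x
    apply Subset.antisymm
    · intro y hy; exact ⟨csInf_le (hbddB x) hy, le_csSup (hbddA x) hy⟩
    · exact (hcvx x).ordConnected.out (haMem x) (hbMem x)
  have haIoo : ∀ x, a x ∈ Ioo (-1:ℝ) 1 := fun x => hUbdd (x, a x) (hFUv x (haMem x))
  have hbIoo : ∀ x, b x ∈ Ioo (-1:ℝ) 1 := fun x => hUbdd (x, b x) (hFUv x (hbMem x))
  have ha_lsc : LowerSemicontinuous a := by
    intro x y hy
    obtain ⟨U', hU'o, hxU', hsub'⟩ := husc x (Ioi y) isOpen_Ioi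
      (fun v hv => lt_of_lt_of_le hy (csInf_le (hbddB x) hv))
    filter_upwards [hU'o.mem_nhds hxU'] with x' hx'
    exact hsub' x' hx' (haMem x')
  have hb_usc : UpperSemicontinuous b := by
    intro x y hy
    obtain ⟨U', hU'o, hxU', hsub'⟩ := husc x (Iio y) isOpen_Iio
      (fun v hv => lt_of_le_of_lt (le_csSup (hbddA x) hv) hy)
    filter_upwards [hU'o.mem_nhds hxU'] with x' hx'
    exact hsub' x' hx' (hbMem x')
  -- upper end function u
  set SU : X → Set ℝ := fun x => {y | Icc (a x) y ⊆ valuesAt U x} with hSU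
  have hSU_nea : ∀ x, a x ∈ SU x := by
    intro x
    simp only [hSU, mem_setOf_eq, Icc_self, singleton_subset_iff]
    exact hFUv x (haMem x)
  have hSU_bdd : ∀ x, BddAbove (SU x) := by
    intro x
    refine ⟨1, fun y hy => ?_⟩
    by_contra hy1
    push_neg at hy1
    have h1 : (1:ℝ) ∈ Icc (a x) y := ⟨(haIoo x).2.le, hy1.le⟩
    have := hUbdd (x, 1) (hy h1)
    simp at this
  set u : X → ℝ := fun x => sSup (SU x) with hu
  have hSU_b : ∀ x, b x ∈ SU x := by
    intro x
    simp only [hSU, mem_setOf_eq]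
    rw [← hIcc x]; exact hFUv x
  have hbu : ∀ x, b x ≤ u x := fun x => le_csSup (hSU_bdd x) (hSU_b x)
  have hIco : ∀ x, Ico (a x) (u x) ⊆ valuesAt U x := by
    intro x y hy
    obtain ⟨y', hy'S, hyy'⟩ := exists_lt_of_lt_csSup ⟨a x, hSU_nea x⟩ hy.2
    exact hy'S ⟨hy.1, hyy'.le⟩
  have hbu' : ∀ x, b x < u x := by
    intro x
    obtain ⟨δ, hδ, hth⟩ := isCompact_Icc.exists_thickening_subset_open (hsliceo x)
      (by rw [← hIcc x]; exact hFUv x)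
    have hmem : b x + δ/2 ∈ SU x := by
      intro y hy
      apply hth
      rw [Metric.mem_thickening_iff]
      rcases le_total y (b x) with h | h
      · exact ⟨y, ⟨hy.1, h⟩, by simp [hδ]⟩
      · exact ⟨b x, ⟨hab x, le_refl _⟩, by
          rw [Real.dist_eq, abs_of_nonneg (by linarith)]
          have := hy.2; linarith⟩
    calc b x < b x + δ/2 := by linarith
      _ ≤ u x := le_csSup (hSU_bdd x) hmem
  have hu_lsc : LowerSemicontinuous u := by
    intro x₀ y₀ hy₀
    obtain ⟨y₁, h₁S, h₁⟩ := exists_lt_of_lt_csSup ⟨a x₀, hSU_nea x₀⟩ hy₀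
    set y₂ := max y₁ (b x₀) with hy₂
    have hy₂S : y₂ ∈ SU x₀ := by
      rcases le_total y₁ (b x₀) with h | h
      · rw [hy₂, max_eq_right h]; exact hSU_b x₀
      · rw [hy₂, max_eq_left h]; exact h₁S
    have hy₂b : b x₀ ≤ y₂ := le_max_right _ _
    have hy₂y₀ : y₀ < y₂ := lt_of_lt_of_le h₁ (le_max_left _ _)
    have hay₂ : a x₀ ≤ y₂ := (hab x₀).trans hy₂b
    have hK : ({x₀} : Set X) ×ˢ Icc (a x₀) y₂ ⊆ U := by
      rintro ⟨x, y⟩ ⟨hx, hy⟩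
      simp only [mem_singleton_iff] at hx
      subst hx
      exact hy₂S hy
    obtain ⟨U₁, V, hU₁o, hVo, hxU₁, hIccV, hUV⟩ :=
      generalized_tube_lemma isCompact_singleton isCompact_Icc hUopen hK
    obtain ⟨δ, hδ, hth⟩ := isCompact_Icc.exists_thickening_subset_open hVo hIccV
    have hJV : Ioo (a x₀ - δ/2) (y₂ + δ/2) ⊆ V := by
      intro y hy
      apply hth
      rw [Metric.mem_thickening_iff]
      rcases lt_trichotomy y (a x₀) with h | h | h
      · exact ⟨a x₀, ⟨le_refl _, hay₂⟩, by
          rw [Real.dist_eq, abs_of_nonpos (by linarith)]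
          have := hy.1; linarith⟩
      · exact ⟨y, ⟨h.ge, by rcases le_total y y₂ with h' | h'; exact h'; · have := hy.2; linarith⟩,
          by simp [hδ]⟩
      · rcases le_total y y₂ with h' | h'
        · exact ⟨y, ⟨h.le, h'⟩, by simp [hδ]⟩
        · exact ⟨y₂, ⟨hay₂, le_refl _⟩, by
            rw [Real.dist_eq, abs_of_nonneg (by linarith)]
            have := hy.2; linarith⟩
    have hJF : valuesAt F x₀ ⊆ Ioo (a x₀ - δ/2) (y₂ + δ/2) := by
      rw [hIcc x₀]
      intro y hy
      constructor
      · have := hy.1; linarith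
      · have := hy.2; have := hy₂b; linarith
    obtain ⟨U₂, hU₂o, hxU₂, hFsub⟩ := husc x₀ _ isOpen_Ioo hJF
    filter_upwards [(hU₁o.inter hU₂o).mem_nhds ⟨hxU₁ rfl, hxU₂⟩] with x hx
    obtain ⟨hx1, hx2⟩ := hx
    have haJ : a x ∈ Ioo (a x₀ - δ/2) (y₂ + δ/2) := hFsub x hx2 (haMem x)
    set y₃ := max y₂ (a x) with hy₃
    have h3S : y₃ ∈ SU x := by
      intro y hy
      have hyJ : y ∈ Ioo (a x₀ - δ/2) (y₂ + δ/2) := by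
        constructor
        · exact lt_of_lt_of_le haJ.1 hy.1
        · exact lt_of_le_of_lt hy.2 (max_lt (by linarith) haJ.2)
      exact hUV (Set.mk_mem_prod hx1 (hJV hyJ))
    calc y₀ < y₂ := hy₂y₀
      _ ≤ y₃ := le_max_left _ _
      _ ≤ u x := le_csSup (hSU_bdd x) h3S
  -- lower end function l
  set SL : X → Set ℝ := fun x => {y | Icc y (b x) ⊆ valuesAt U x} with hSL
  have hSL_neb : ∀ x, b x ∈ SL x := by
    intro x
    simp only [hSL, mem_setOf_eq, Icc_self, singleton_subset_iff]
    exact hFUv x (hbMem x)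
  have hSL_bdd : ∀ x, BddBelow (SL x) := by
    intro x
    refine ⟨-1, fun y hy => ?_⟩
    by_contra hy1
    push_neg at hy1
    have h1 : (-1:ℝ) ∈ Icc y (b x) := ⟨hy1.le, (hbIoo x).1.le⟩
    have := hUbdd (x, -1) (hy h1)
    simp at this
  set l : X → ℝ := fun x => sInf (SL x) with hl
  have hSL_a : ∀ x, a x ∈ SL x := by
    intro x
    simp only [hSL, mem_setOf_eq]
    rw [← hIcc x]; exact hFUv x
  have hIoc : ∀ x, Ioc (l x) (b x) ⊆ valuesAt U x := by
    intro x y hy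
    obtain ⟨y', hy'S, hyy'⟩ := exists_lt_of_csInf_lt ⟨b x, hSL_neb x⟩ hy.1
    exact hy'S ⟨hyy'.le, hy.2⟩
  have hla' : ∀ x, l x < a x := by
    intro x
    obtain ⟨δ, hδ, hth⟩ := isCompact_Icc.exists_thickening_subset_open (hsliceo x)
      (by rw [← hIcc x]; exact hFUv x)
    have hmem : a x - δ/2 ∈ SL x := by
      intro y hy
      apply hth
      rw [Metric.mem_thickening_iff]
      rcases le_total (a x) y with h | h
      · exact ⟨y, ⟨h, hy.2⟩, by simp [hδ]⟩
      · exact ⟨a x, ⟨le_refl _, hab x⟩, by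
          rw [Real.dist_eq, abs_of_nonpos (by linarith)]
          have := hy.1; linarith⟩
    calc l x ≤ a x - δ/2 := csInf_le (hSL_bdd x) hmem
      _ < a x := by linarith
  have hl_usc : UpperSemicontinuous l := by
    intro x₀ y₀ hy₀
    obtain ⟨y₁, h₁S, h₁⟩ := exists_lt_of_csInf_lt ⟨b x₀, hSL_neb x₀⟩ hy₀
    set y₂ := min y₁ (a x₀) with hy₂
    have hy₂S : y₂ ∈ SL x₀ := by
      rcases le_total y₁ (a x₀) with h | h
      · rw [hy₂, min_eq_left h]; exact h₁S
      · rw [hy₂, min_eq_right h]; exact hSL_a x₀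
    have hy₂a : y₂ ≤ a x₀ := min_le_right _ _
    have hy₂y₀ : y₂ < y₀ := lt_of_le_of_lt (min_le_left _ _) h₁
    have hy₂b : y₂ ≤ b x₀ := hy₂a.trans (hab x₀)
    have hK : ({x₀} : Set X) ×ˢ Icc y₂ (b x₀) ⊆ U := by
      rintro ⟨x, y⟩ ⟨hx, hy⟩
      simp only [mem_singleton_iff] at hx
      subst hx
      exact hy₂S hy
    obtain ⟨U₁, V, hU₁o, hVo, hxU₁, hIccV, hUV⟩ :=
      generalized_tube_lemma isCompact_singleton isCompact_Icc hUopen hK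
    obtain ⟨δ, hδ, hth⟩ := isCompact_Icc.exists_thickening_subset_open hVo hIccV
    have hJV : Ioo (y₂ - δ/2) (b x₀ + δ/2) ⊆ V := by
      intro y hy
      apply hth
      rw [Metric.mem_thickening_iff]
      rcases lt_trichotomy y y₂ with h | h | h
      · exact ⟨y₂, ⟨le_refl _, hy₂b⟩, by
          rw [Real.dist_eq, abs_of_nonpos (by linarith)]
          have := hy.1; linarith⟩
      · exact ⟨y, ⟨h.ge, h.le.trans hy₂b⟩, by simp [hδ]⟩
      · rcases le_total y (b x₀) with h' | h'
        · exact ⟨y, ⟨h.le, h'⟩, by simp [hδ]⟩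
        · exact ⟨b x₀, ⟨hy₂b, le_refl _⟩, by
            rw [Real.dist_eq, abs_of_nonneg (by linarith)]
            have := hy.2; linarith⟩
    have hJF : valuesAt F x₀ ⊆ Ioo (y₂ - δ/2) (b x₀ + δ/2) := by
      rw [hIcc x₀]
      intro y hy
      constructor
      · have := hy.1; have := hy₂a; linarith
      · have := hy.2; linarith
    obtain ⟨U₂, hU₂o, hxU₂, hFsub⟩ := husc x₀ _ isOpen_Ioo hJF
    filter_upwards [(hU₁o.inter hU₂o).mem_nhds ⟨hxU₁ rfl, hxU₂⟩] with x hx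
    obtain ⟨hx1, hx2⟩ := hx
    have hbJ : b x ∈ Ioo (y₂ - δ/2) (b x₀ + δ/2) := hFsub x hx2 (hbMem x)
    set y₃ := min y₂ (b x) with hy₃
    have h3S : y₃ ∈ SL x := by
      intro y hy
      have hyJ : y ∈ Ioo (y₂ - δ/2) (b x₀ + δ/2) := by
        constructor
        · exact lt_of_lt_of_le (lt_min (by linarith) hbJ.1) hy.1
        · exact lt_of_le_of_lt hy.2 hbJ.2
      exact hUV (Set.mk_mem_prod hx1 (hJV hyJ))
    calc l x ≤ y₃ := csInf_le (hSL_bdd x) h3S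
      _ ≤ y₂ := min_le_left _ _
      _ < y₀ := hy₂y₀
  exact ⟨a, b, u, l, hIcc, hab, haIoo, hbIoo, ha_lsc, hb_usc, hu_lsc, hl_usc, hbu', hla', hIco, hIoc⟩

variable {X : Type*} [TopologicalSpace X]

lemma infinite_nbhd [T1Space X] {x : X} (hx : ¬ IsOpen ({x} : Set X)) {N : Set X}
    (hN : IsOpen N) (hxN : x ∈ N) : N.Infinite := by
  by_contra hfin
  rw [Set.not_infinite] at hfin
  apply hx
  have h1 : IsClosed (N \ {x}) := ((hfin.subset diff_subset).isClosed)
  have h2 : ({x} : Set X) = N ∩ (N \ {x})ᶜ := by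
    ext y
    simp only [mem_singleton_iff, mem_inter_iff, mem_compl_iff, mem_diff, not_and, not_not]
    constructor
    · rintro rfl; exact ⟨hxN, fun _ => rfl⟩
    · rintro ⟨hyN, hy⟩; exact hy hyN
  rw [h2]
  exact hN.inter h1.isOpen_compl

lemma greedy_choice [Nonempty X] {n : ℕ} (N : Fin n → Set X) (A : Set X) (hA : A.Finite)
    (s : Finset (Fin n)) (hN : ∀ k ∈ s, (N k).Infinite) :
    ∃ z : Fin n → X, (∀ k ∈ s, z k ∈ N k ∧ z k ∉ A) ∧ Set.InjOn z s := by
  classical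
  induction s using Finset.induction_on with
  | empty => exact ⟨fun _ => Classical.arbitrary X, by simp, by simp [Set.InjOn]⟩
  | @insert k s hk ih =>
    obtain ⟨z, hz1, hz2⟩ := ih (fun j hj => hN j (Finset.mem_insert_of_mem hj))
    have hNk : (N k).Infinite := hN k (Finset.mem_insert_self k s)
    have hfin : (A ∪ (z '' (s : Set (Fin n)))).Finite :=
      hA.union ((s.finite_toSet.image z))
    obtain ⟨w, hw⟩ := (hNk.diff hfin).nonempty
    rw [Set.mem_diff, Set.mem_union, not_or] at hw
    have hwN := hw.1
    have hwA := hw.2.1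
    have hwz := hw.2.2
    refine ⟨Function.update z k w, ?_, ?_⟩
    · intro j hj
      rcases Finset.mem_insert.1 hj with rfl | hj
      · rw [Function.update_self]; exact ⟨hwN, hwA⟩
      · rw [Function.update_of_ne (fun h : j = k => hk (h ▸ hj))]
        exact hz1 j hj
    · intro i hi j hj hij
      simp only [Finset.coe_insert, Set.mem_insert_iff] at hi hj
      rcases hi with hik | hi <;> rcases hj with hjk | hj
      · rw [hik, hjk]
      · rw [hik, Function.update_self, Function.update_of_ne (fun h : j = k => hk (h ▸ hj))] at hij
        exact absurd ⟨j, hj, hij.symm⟩ hwz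
      · rw [hjk, Function.update_self, Function.update_of_ne (fun h : i = k => hk (h ▸ hi))] at hij
        exact absurd ⟨i, hi, hij⟩ hwz
      · rw [Function.update_of_ne (fun h : i = k => hk (h ▸ hi)),
          Function.update_of_ne (fun h : j = k => hk (h ▸ hj))] at hij
        exact hz2 hi hj hij

lemma disjoint_nbhds [T2Space X] (R : Finset X) (G : X → Set X)
    (hG : ∀ p ∈ R, IsOpen (G p) ∧ p ∈ G p) :
    ∃ N : X → Set X, (∀ p ∈ R, IsOpen (N p) ∧ p ∈ N p ∧ N p ⊆ G p) ∧
      ∀ p ∈ R, ∀ q ∈ R, p ≠ q → Disjoint (N p) (N q) := by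
  classical
  have hsep : ∀ p q : X, ∃ AB : Set X × Set X, p ≠ q →
      IsOpen AB.1 ∧ IsOpen AB.2 ∧ p ∈ AB.1 ∧ q ∈ AB.2 ∧ Disjoint AB.1 AB.2 := by
    intro p q
    by_cases h : p ≠ q
    · obtain ⟨u, v, hu, hv, hpu, hqv, huv⟩ := t2_separation h
      exact ⟨(u, v), fun _ => ⟨hu, hv, hpu, hqv, huv⟩⟩
    · exact ⟨(univ, univ), fun h' => absurd h' h⟩
  choose sep hsep using hsep
  set N : X → Set X := fun p => G p ∩ ⋂ q ∈ R.erase p, ((sep p q).1 ∩ (sep q p).2) with hN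
  have hsubset : ∀ p, ∀ q ∈ R.erase p, N p ⊆ (sep p q).1 ∩ (sep q p).2 := by
    intro p q hq x hx
    exact Set.mem_iInter₂.1 hx.2 q hq
  refine ⟨N, fun p hp => ⟨?_, ?_, fun x hx => hx.1⟩, ?_⟩
  · refine ((hG p hp).1).inter (((R.erase p).finite_toSet.isOpen_biInter) ?_)
    intro q hq
    rw [Finset.mem_coe, Finset.mem_erase] at hq
    have h1 := hsep p q (Ne.symm hq.1)
    have h2 := hsep q p hq.1
    exact h1.1.inter h2.2.1
  · refine ⟨(hG p hp).2, Set.mem_iInter₂.2 ?_⟩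
    intro q hq
    rw [Finset.mem_erase] at hq
    exact ⟨(hsep p q (Ne.symm hq.1)).2.2.1, (hsep q p hq.1).2.2.2.1⟩
  · intro p hp q hq hpq
    have h1 : N p ⊆ (sep p q).1 := fun x hx =>
      (hsubset p q (Finset.mem_erase.2 ⟨Ne.symm hpq, hq⟩) hx).1
    have h2 : N q ⊆ (sep p q).2 := fun x hx =>
      (hsubset q p (Finset.mem_erase.2 ⟨hpq, hp⟩) hx).2
    exact Set.disjoint_of_subset h1 h2 (hsep p q hpq).2.2.2.2

variable {X : Type*} [TopologicalSpace X]

lemma main_aux [T2Space X] [NormalSpace X]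
    (F : Set (X × ℝ)) (hF : IsCusco F)
    (hiso : ∀ x : X, IsOpen ({x} : Set X) → ∃ y : ℝ, valuesAt F x = {y})
    (n : ℕ) (W : Fin n → Set (X × ℝ)) (hW : ∀ k, IsOpen (W k))
    (hsub : F ⊆ ⋃ k, W k) (hmeet : ∀ k, (F ∩ W k).Nonempty)
    (hbdd : ∀ k, W k ⊆ univ ×ˢ Ioo (-1:ℝ) 1) :
    ∃ g : X → ℝ, Continuous g ∧ graphOf g ⊆ ⋃ k, W k ∧
      ∀ k, (graphOf g ∩ W k).Nonempty := by
  classical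
  rcases isEmpty_or_nonempty X with hX | hX
  · refine ⟨fun _ => 0, continuous_const, ?_, ?_⟩
    · rintro ⟨x, y⟩ _
      exact (hX.false x).elim
    · intro k
      obtain ⟨q, hq⟩ := hmeet k
      exact (hX.false q.1).elim
  set U : Set (X × ℝ) := ⋃ k, W k with hU
  have hUopen : IsOpen U := isOpen_iUnion hW
  have hUbdd : ∀ q ∈ U, q.2 ∈ Ioo (-1:ℝ) 1 := by
    intro q hq
    rw [hU, mem_iUnion] at hq
    obtain ⟨k, hk⟩ := hq
    exact (hbdd k hk).2
  obtain ⟨a, b, u, l, hIcc, hab, haIoo, hbIoo, ha_lsc, hb_usc, hu_lsc, hl_usc, hbu, hla,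
    hIco, hIoc⟩ := cusco_structure F hF U hUopen hsub hUbdd
  have hlu : ∀ x, l x < u x := fun x => (hla x).trans ((hab x).trans_lt (hbu x))
  have hIoo : ∀ x, Ioo (l x) (u x) ⊆ valuesAt U x := by
    intro x y hy
    rcases le_or_gt (a x) y with h | h
    · exact hIco x ⟨h, hy.2⟩
    · exact hIoc x ⟨hy.1, h.le.trans (hab x)⟩
  -- the two insertions
  obtain ⟨φ, hφc, hφ⟩ := katetov_tong hl_usc ha_lsc (fun x => (hla x).le) one_pos
    (fun x => (hla x).le.trans (haIoo x).2.le) (fun x => (haIoo x).1.le)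
  obtain ⟨ψ, hψc, hψ⟩ := katetov_tong hb_usc hu_lsc (fun x => (hbu x).le) one_pos
    (fun x => (hbIoo x).2.le)
    (fun x => (haIoo x).1.le.trans ((hab x).trans (hbu x).le))
  set g₀ : X → ℝ := fun x => (φ x + ψ x)/2 with hg₀def
  have hg₀c : Continuous g₀ := (hφc.add hψc).div_const 2
  have hg₀l : ∀ x, l x < g₀ x := by
    intro x
    have h1 := (hφ x).1
    have h2 := (hψ x).1
    have h3 := hla x
    have h4 := hab x
    show l x < (φ x + ψ x)/2
    linarith
  have hg₀u : ∀ x, g₀ x < u x := by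
    intro x
    have h1 := (hφ x).2
    have h2 := (hψ x).2
    have h3 := hab x
    have h4 := hbu x
    show (φ x + ψ x)/2 < u x
    linarith
  -- marked points
  have hxy : ∀ k, ∃ q : X × ℝ, q ∈ F ∧ q ∈ W k := by
    intro k
    obtain ⟨q, hq⟩ := hmeet k
    exact ⟨q, hq.1, hq.2⟩
  choose pp hpF hpW using hxy
  set xk : Fin n → X := fun k => (pp k).1 with hxk
  set yk : Fin n → ℝ := fun k => (pp k).2 with hyk
  have hykF : ∀ k, yk k ∈ valuesAt F (xk k) := fun k => hpF k
  have hykW : ∀ k, (xk k, yk k) ∈ W k := fun k => hpW k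
  -- tubes
  have htube0 : ∀ k, ∃ (O : Set X) (δ : ℝ), 0 < δ ∧ IsOpen O ∧ xk k ∈ O ∧
      O ×ˢ Ioo (yk k - δ) (yk k + δ) ⊆ W k := by
    intro k
    obtain ⟨O, V, hO, hV, hxO, hyV, hOV⟩ := isOpen_prod_iff.1 (hW k) (xk k) (yk k) (hykW k)
    obtain ⟨δ, hδ, hball⟩ := Metric.isOpen_iff.1 hV (yk k) hyV
    refine ⟨O, δ, hδ, hO, hxO, Subset.trans (prod_mono_right ?_) hOV⟩
    rw [← Real.ball_eq_Ioo]
    exact hball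
  choose O δ hδpos hOopen hxO htube using htube0
  -- candidate neighborhoods
  set Cc : Fin n → Set X := fun k =>
    O k ∩ ({x | yk k - δ k < u x} ∩ {x | l x < yk k + δ k}) with hCc
  have hCopen : ∀ k, IsOpen (Cc k) := by
    intro k
    exact (hOopen k).inter ((isOpen_cont_lt_lsc hu_lsc continuous_const).inter
      (isOpen_usc_lt_cont hl_usc continuous_const))
  have hykab : ∀ k, a (xk k) ≤ yk k ∧ yk k ≤ b (xk k) := by
    intro k
    have := hykF k
    rw [hIcc (xk k)] at this
    exact ⟨this.1, this.2⟩
  have hxC : ∀ k, xk k ∈ Cc k := by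
    intro k
    refine ⟨hxO k, ?_, ?_⟩
    · have h1 := (hykab k).2
      have h2 := hbu (xk k)
      have h3 := hδpos k
      show yk k - δ k < u (xk k)
      linarith
    · have h1 := (hykab k).1
      have h2 := hla (xk k)
      have h3 := hδpos k
      show l (xk k) < yk k + δ k
      linarith
  -- choosing values over candidate points
  have hvchoice : ∀ k, ∀ z ∈ Cc k, ∃ v : ℝ, v ∈ Ioo (l z) (u z) ∧ (z, v) ∈ W k := by
    intro k z hz
    obtain ⟨hzO, hzu, hzl⟩ := hz
    have hzu' : yk k - δ k < u z := hzu
    have hzl' : l z < yk k + δ k := hzl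
    set lo := max (l z) (yk k - δ k) with hlo
    set hi := min (u z) (yk k + δ k) with hhi
    have h1 : lo < hi := by
      apply max_lt
      · exact lt_min (hlu z) hzl'
      · exact lt_min hzu' (by have := hδpos k; linarith)
    refine ⟨(lo + hi)/2, ⟨?_, ?_⟩, ?_⟩
    · have : l z ≤ lo := le_max_left _ _
      linarith
    · have : hi ≤ u z := min_le_left _ _
      linarith
    · apply htube k
      refine ⟨hzO, ?_, ?_⟩
      · have : yk k - δ k ≤ lo := le_max_right _ _
        show yk k - δ k < (lo + hi)/2
        linarith
      · have : hi ≤ yk k + δ k := min_le_right _ _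
        show (lo + hi)/2 < yk k + δ k
        linarith
  -- isolated decision
  set s : Finset (Fin n) := Finset.univ.filter (fun k => ¬ IsOpen ({xk k} : Set X)) with hs
  have hCinf : ∀ k ∈ s, (Cc k).Infinite := by
    intro k hk
    rw [hs, Finset.mem_filter] at hk
    exact infinite_nbhd hk.2 (hCopen k) (hxC k)
  obtain ⟨zf, hzf1, hzf2⟩ := greedy_choice Cc (Set.range xk) (Set.finite_range xk) s hCinf
  have hmem_s : ∀ k, ¬ IsOpen ({xk k} : Set X) → k ∈ s := by
    intro k hk
    rw [hs, Finset.mem_filter]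
    exact ⟨Finset.mem_univ k, hk⟩
  set z : Fin n → X := fun k => if IsOpen ({xk k} : Set X) then xk k else zf k with hzdef
  set v : Fin n → ℝ := fun k => if h : IsOpen ({xk k} : Set X) then yk k
    else Classical.choose (hvchoice k (zf k) (hzf1 k (hmem_s k h)).1) with hvdef
  have hab_iso : ∀ k, IsOpen ({xk k} : Set X) → a (xk k) = yk k ∧ b (xk k) = yk k := by
    intro k hk
    obtain ⟨y, hy⟩ := hiso (xk k) hk
    have h1 : yk k ∈ valuesAt F (xk k) := hykF k
    rw [hy, mem_singleton_iff] at h1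
    have h2 : Icc (a (xk k)) (b (xk k)) = {y} := by rw [← hIcc (xk k)]; exact hy
    rw [Set.Icc_eq_singleton_iff] at h2
    exact ⟨h2.1.trans h1.symm, h2.2.trans h1.symm⟩
  have hzv : ∀ k, (z k, v k) ∈ W k ∧ v k ∈ Ioo (l (z k)) (u (z k)) := by
    intro k
    by_cases hk : IsOpen ({xk k} : Set X)
    · have hzk : z k = xk k := by rw [hzdef]; simp [hk]
      have hvk : v k = yk k := by rw [hvdef]; simp [hk]
      rw [hzk, hvk]
      refine ⟨hykW k, ?_, ?_⟩
      · have := (hab_iso k hk).1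
        have := hla (xk k)
        linarith
      · have := (hab_iso k hk).2
        have := hbu (xk k)
        linarith
    · have hzk : z k = zf k := by rw [hzdef]; simp [hk]
      have hvk : v k = Classical.choose (hvchoice k (zf k) (hzf1 k (hmem_s k hk)).1) := by
        rw [hvdef]; simp [hk]
      have hspec := Classical.choose_spec (hvchoice k (zf k) (hzf1 k (hmem_s k hk)).1)
      rw [hzk, hvk]
      exact ⟨hspec.2, hspec.1⟩
  have hcons : ∀ j k, z j = z k → v j = v k := by
    intro j k hjk
    by_cases hj : IsOpen ({xk j} : Set X) <;> by_cases hk' : IsOpen ({xk k} : Set X)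
    · have hzj : z j = xk j := by rw [hzdef]; simp [hj]
      have hzk : z k = xk k := by rw [hzdef]; simp [hk']
      have hx : xk j = xk k := by rw [← hzj, ← hzk]; exact hjk
      have hvj : v j = yk j := by rw [hvdef]; simp [hj]
      have hvk : v k = yk k := by rw [hvdef]; simp [hk']
      rw [hvj, hvk]
      have h1 := (hab_iso j hj).1
      have h2 := (hab_iso j hj).2
      have h3 := (hab_iso k hk').1
      have h4 := (hab_iso k hk').2
      rw [hx] at h1 h2
      linarith
    · have hzj : z j = xk j := by rw [hzdef]; simp [hj]
      have hzk : z k = zf k := by rw [hzdef]; simp [hk']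
      have := (hzf1 k (hmem_s k hk')).2
      exact absurd (by rw [← hzk, ← hjk, hzj]; exact mem_range_self j) this
    · have hzj : z j = zf j := by rw [hzdef]; simp [hj]
      have hzk : z k = xk k := by rw [hzdef]; simp [hk']
      have := (hzf1 j (hmem_s j hj)).2
      exact absurd (by rw [← hzj, hjk, hzk]; exact mem_range_self k) this
    · have hzj : z j = zf j := by rw [hzdef]; simp [hj]
      have hzk : z k = zf k := by rw [hzdef]; simp [hk']
      have : j = k := hzf2 (hmem_s j hj) (hmem_s k hk') (by rw [← hzj, ← hzk]; exact hjk)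
      rw [this]
  -- dedupe and bumps
  set R : Finset X := Finset.image z Finset.univ with hR
  set vf : X → ℝ := fun q => if h : ∃ k, z k = q then v (Classical.choose h) else 0 with hvfdef
  have hvfz : ∀ k, vf (z k) = v k := by
    intro k
    have hex : ∃ j, z j = z k := ⟨k, rfl⟩
    rw [hvfdef]
    simp only [dif_pos hex]
    exact hcons _ k (Classical.choose_spec hex)
  set G : X → Set X := fun q =>
    {x | l x < g₀ x + (vf q - g₀ q)} ∩ {x | g₀ x + (vf q - g₀ q) < u x} with hGdef
  have hGopen : ∀ q, IsOpen (G q) :=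
    fun q => (isOpen_usc_lt_cont hl_usc (hg₀c.add continuous_const)).inter
      (isOpen_cont_lt_lsc hu_lsc (hg₀c.add continuous_const))
  have hGmem : ∀ q ∈ R, q ∈ G q := by
    intro q hq
    obtain ⟨k, -, rfl⟩ := Finset.mem_image.1 hq
    have h1 := (hzv k).2
    constructor
    · show l (z k) < g₀ (z k) + (vf (z k) - g₀ (z k))
      rw [hvfz k]
      have := h1.1
      linarith
    · show g₀ (z k) + (vf (z k) - g₀ (z k)) < u (z k)
      rw [hvfz k]
      have := h1.2
      linarith
  obtain ⟨N, hN1, hN2⟩ := disjoint_nbhds R G (fun q hq => ⟨hGopen q, hGmem q hq⟩)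
  have hbump : ∀ q, ∃ θ : C(X, ℝ), q ∈ R →
      (EqOn θ 0 (N q)ᶜ ∧ θ q = 1 ∧ ∀ x, θ x ∈ Icc (0:ℝ) 1) := by
    intro q
    by_cases hq : q ∈ R
    · obtain ⟨hNo, hNq, -⟩ := hN1 q hq
      obtain ⟨θ, hθ0, hθ1, hθ01⟩ := exists_continuous_zero_one_of_isClosed
        hNo.isClosed_compl isClosed_singleton
        (Set.disjoint_singleton_right.2 (by simpa using hNq))
      exact ⟨θ, fun _ => ⟨hθ0, by simpa using hθ1 rfl, hθ01⟩⟩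
    · exact ⟨0, fun h => absurd h hq⟩
  choose θ hθ using hbump
  set g : X → ℝ := fun x => g₀ x + ∑ q ∈ R, θ q x * (vf q - g₀ q) with hgdef
  have hgc : Continuous g := by
    apply hg₀c.add
    apply continuous_finset_sum
    intro q _
    exact ((θ q).continuous.mul continuous_const)
  have hout : ∀ x, (∀ q ∈ R, x ∉ N q) → g x = g₀ x := by
    intro x hx
    rw [hgdef]
    simp only
    rw [Finset.sum_eq_zero, add_zero]
    intro q hq
    have : θ q x = 0 := ((hθ q) hq).1 (hx q hq)
    rw [this, zero_mul]
  have hIn : ∀ x, ∀ q ∈ R, x ∈ N q → g x = g₀ x + θ q x * (vf q - g₀ q) := by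
    intro x q hq hxq
    rw [hgdef]
    simp only
    congr 1
    apply Finset.sum_eq_single_of_mem q hq
    intro r hr hrq
    have hd := hN2 r hr q hq hrq
    have : x ∉ N r := fun hxr => (Set.disjoint_left.1 hd hxr) hxq
    have : θ r x = 0 := ((hθ r) hr).1 this
    rw [this, zero_mul]
  have hgIoo : ∀ x, g x ∈ Ioo (l x) (u x) := by
    intro x
    by_cases hx : ∃ q ∈ R, x ∈ N q
    · obtain ⟨q, hq, hxq⟩ := hx
      rw [hIn x q hq hxq]
      have ht01 := ((hθ q) hq).2.2 x
      have hGx := (hN1 q hq).2.2 hxq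
      have hG1 : l x < g₀ x + (vf q - g₀ q) := hGx.1
      have hG2 : g₀ x + (vf q - g₀ q) < u x := hGx.2
      have hl0 := hg₀l x
      have hu0 := hg₀u x
      have ht0 := ht01.1
      have ht1 := ht01.2
      constructor
      · rcases le_or_gt 0 (vf q - g₀ q) with h | h
        · nlinarith
        · nlinarith
      · rcases le_or_gt 0 (vf q - g₀ q) with h | h
        · nlinarith
        · nlinarith
    · push_neg at hx
      rw [hout x hx]
      exact ⟨hg₀l x, hg₀u x⟩
  have hgz : ∀ k, g (z k) = v k := by
    intro k
    have hzR : z k ∈ R := Finset.mem_image.2 ⟨k, Finset.mem_univ k, rfl⟩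
    have hzN : z k ∈ N (z k) := (hN1 _ hzR).2.1
    rw [hIn (z k) (z k) hzR hzN, ((hθ (z k)) hzR).2.1, hvfz k]
    ring
  refine ⟨g, hgc, ?_, ?_⟩
  · rintro ⟨x, y⟩ hxy
    have hyx : y = g x := hxy
    rw [show ((x, y) : X × ℝ) = (x, g x) by rw [hyx]]
    exact hIoo x (hgIoo x)
  · intro k
    refine ⟨(z k, v k), ?_, (hzv k).1⟩
    show v k = g (z k)
    rw [hgz k]

end Auxiliary

/-- If `X` is normal Hausdorff, `F` is cusco and single-valued at isolated points, and
`W₁, …, Wₙ` are open sets with `graph F ⊆ ⋃ Wₖ` and `graph F` meeting each `Wₖ`, then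
some continuous `g : X → ℝ` has graph contained in `⋃ Wₖ` and meeting each `Wₖ`. -/
theorem exists_continuous_in_vietoris_basic {X : Type*} [TopologicalSpace X] [T2Space X]
    [NormalSpace X] (F : Set (X × ℝ)) (hF : IsCusco F)
    (hiso : ∀ x : X, IsOpen ({x} : Set X) → ∃ y : ℝ, valuesAt F x = {y})
    (n : ℕ) (W : Fin n → Set (X × ℝ)) (hW : ∀ k, IsOpen (W k))
    (hsub : F ⊆ ⋃ k, W k) (hmeet : ∀ k, (F ∩ W k).Nonempty) :
    ∃ g : X → ℝ, Continuous g ∧ graphOf g ⊆ ⋃ k, W k ∧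
      ∀ k, (graphOf g ∩ W k).Nonempty := by
  classical
  haveI : OrdConnected (Ioo (-1:ℝ) 1) := Set.ordConnected_Ioo
  set e := orderIsoIooNegOneOne ℝ with he
  set t : ℝ → ℝ := fun y => (e y : ℝ) with ht
  have htc : Continuous t := continuous_subtype_val.comp e.toHomeomorph.continuous
  have htmono : StrictMono t := fun x y h => e.strictMono h
  have htinj : Function.Injective t := htmono.injective
  have htmem : ∀ y, t y ∈ Ioo (-1:ℝ) 1 := fun y => (e y).2
  have htsurj : ∀ w ∈ Ioo (-1:ℝ) 1, ∃ y, t y = w := by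
    intro w hw
    refine ⟨e.symm ⟨w, hw⟩, ?_⟩
    show ((e (e.symm ⟨w, hw⟩)) : ℝ) = w
    rw [e.apply_symm_apply]
  have hto : IsOpenEmbedding t :=
    isOpen_Ioo.isOpenEmbedding_subtypeVal.comp e.toHomeomorph.isOpenEmbedding
  set tm : X × ℝ → X × ℝ := Prod.map id t with htm
  have htmo : IsOpenEmbedding tm := IsOpenEmbedding.id.prodMap hto
  set F' : Set (X × ℝ) := tm '' F with hF'
  set W' : Fin n → Set (X × ℝ) := fun k => tm '' W k with hW'
  have himg : ∀ (S : Set (X × ℝ)) (x : X), valuesAt (tm '' S) x = t '' valuesAt S x := by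
    intro S x
    ext y
    constructor
    · rintro ⟨⟨q1, q2⟩, hq, heq⟩
      have h1 : q1 = x := congrArg Prod.fst heq
      have h2 : t q2 = y := congrArg Prod.snd heq
      subst h1
      exact ⟨q2, hq, h2⟩
    · rintro ⟨v, hv, rfl⟩
      exact ⟨(x, v), hv, rfl⟩
  have hback : ∀ (S : Set (X × ℝ)) (x : X) (yv : ℝ), (x, t yv) ∈ tm '' S → (x, yv) ∈ S := by
    rintro S x yv ⟨⟨q1, q2⟩, hq, heq⟩
    have h1 : q1 = x := congrArg Prod.fst heq
    have h2 : t q2 = t yv := congrArg Prod.snd heq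
    have h3 : q2 = yv := htinj h2
    rw [← h1, ← h3]
    exact hq
  have hF'cusco : IsCusco F' := by
    constructor
    · intro x V hV hFV
      rw [hF', himg] at hFV
      obtain ⟨U, hUo, hxU, hsubU⟩ := hF.1 x (t ⁻¹' V) (hV.preimage htc)
        (Set.image_subset_iff.1 hFV)
      refine ⟨U, hUo, hxU, fun w hw => ?_⟩
      rw [hF', himg]
      exact (Set.image_mono (hsubU w hw)).trans (Set.image_preimage_subset t V)
    · intro x
      rw [hF', himg]
      refine ⟨((hF.2 x).1).image t, ((hF.2 x).2.1).image htc, ?_⟩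
      rw [convex_iff_ordConnected]
      constructor
      rintro y1 ⟨v1, hv1, rfl⟩ y2 ⟨v2, hv2, rfl⟩ w hw
      have hwIoo : w ∈ Ioo (-1:ℝ) 1 :=
        ⟨(htmem v1).1.trans_le hw.1, lt_of_le_of_lt hw.2 (htmem v2).2⟩
      obtain ⟨y, rfl⟩ := htsurj w hwIoo
      have hy1 : v1 ≤ y := htmono.le_iff_le.1 hw.1
      have hy2 : y ≤ v2 := htmono.le_iff_le.1 hw.2
      exact ⟨y, ((hF.2 x).2.2).ordConnected.out hv1 hv2 ⟨hy1, hy2⟩, rfl⟩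
  have hiso' : ∀ x : X, IsOpen ({x} : Set X) → ∃ y : ℝ, valuesAt F' x = {y} := by
    intro x hx
    obtain ⟨y, hy⟩ := hiso x hx
    exact ⟨t y, by rw [hF', himg, hy, Set.image_singleton]⟩
  have hW'o : ∀ k, IsOpen (W' k) := fun k => htmo.isOpenMap _ (hW k)
  have hsub' : F' ⊆ ⋃ k, W' k := by
    rw [hF', hW']
    intro q hq
    obtain ⟨p, hp, rfl⟩ := hq
    obtain ⟨k, hk⟩ := mem_iUnion.1 (hsub hp)
    exact mem_iUnion.2 ⟨k, mem_image_of_mem tm hk⟩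
  have hmeet' : ∀ k, (F' ∩ W' k).Nonempty := by
    intro k
    obtain ⟨q, hq1, hq2⟩ := hmeet k
    exact ⟨tm q, mem_image_of_mem tm hq1, mem_image_of_mem tm hq2⟩
  have hbdd' : ∀ k, W' k ⊆ univ ×ˢ Ioo (-1:ℝ) 1 := by
    rintro k ⟨x, y⟩ ⟨⟨q1, q2⟩, hq, heq⟩
    have h2 : t q2 = y := congrArg Prod.snd heq
    exact ⟨trivial, h2 ▸ htmem q2⟩
  obtain ⟨g', hg'c, hg'sub, hg'meet⟩ := main_aux F' hF'cusco hiso' n W' hW'o hsub' hmeet' hbdd'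
  have hrange : ∀ x, g' x ∈ Ioo (-1:ℝ) 1 := by
    intro x
    have h1 : (x, g' x) ∈ graphOf g' := rfl
    obtain ⟨k, hk⟩ := mem_iUnion.1 (hg'sub h1)
    exact (hbdd' k hk).2
  set g : X → ℝ := fun x => e.symm ⟨g' x, hrange x⟩ with hg
  have hgc : Continuous g :=
    e.toHomeomorph.symm.continuous.comp (hg'c.subtype_mk _)
  have htg : ∀ x, t (g x) = g' x := by
    intro x
    show ((e (e.symm ⟨g' x, hrange x⟩)) : ℝ) = g' x
    rw [e.apply_symm_apply]
  refine ⟨g, hgc, ?_, ?_⟩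
  · rintro ⟨x, y⟩ hxy
    have hyx : y = g x := hxy
    subst hyx
    have h1 : (x, g' x) ∈ graphOf g' := rfl
    obtain ⟨k, hk⟩ := mem_iUnion.1 (hg'sub h1)
    refine mem_iUnion.2 ⟨k, ?_⟩
    apply hback (W k) x (g x)
    rw [htg x]
    exact hk
  · intro k
    obtain ⟨⟨x, y⟩, hgr, hWk⟩ := hg'meet k
    have hyx : y = g' x := hgr
    subst hyx
    refine ⟨(x, g x), rfl, ?_⟩
    apply hback (W k) x (g x)
    rw [htg x]
    exact hWk
end

section
/- Let X be a normal Hausdorff space. Then C(X), the set of graphs of continuous real-valued functions on X, is dense in L₀(X) with the Vietoris topology τ_V, and consequently also dense in (MC(X), τ_V). -/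
open Set Topology TopologicalSpace

open Filter

section Insertion
variable {X : Type*} [TopologicalSpace X]

def Usc (g : X → ℝ) : Prop := ∀ x c, g x < c → ∃ U, IsOpen U ∧ x ∈ U ∧ ∀ y ∈ U, g y < c
def Lsc (h : X → ℝ) : Prop := ∀ x c, c < h x → ∃ U, IsOpen U ∧ x ∈ U ∧ ∀ y ∈ U, c < h y

lemma Usc.isOpen_lt {g : X → ℝ} (hg : Usc g) (c : ℝ) : IsOpen {x | g x < c} := by
  rw [isOpen_iff_forall_mem_open]
  intro x hx
  obtain ⟨U, hU, hxU, hUc⟩ := hg x c hx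
  exact ⟨U, fun y hy => hUc y hy, hU, hxU⟩

lemma Lsc.isOpen_gt {h : X → ℝ} (hh : Lsc h) (c : ℝ) : IsOpen {x | c < h x} := by
  rw [isOpen_iff_forall_mem_open]
  intro x hx
  obtain ⟨U, hU, hxU, hUc⟩ := hh x c hx
  exact ⟨U, fun y hy => hUc y hy, hU, hxU⟩

lemma Continuous.usc {f : X → ℝ} (hf : Continuous f) : Usc f := fun x c hc =>
  ⟨f ⁻¹' Iio c, isOpen_Iio.preimage hf, hc, fun _ hy => hy⟩

lemma Continuous.lsc {f : X → ℝ} (hf : Continuous f) : Lsc f := fun x c hc =>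
  ⟨f ⁻¹' Ioi c, isOpen_Ioi.preimage hf, hc, fun _ hy => hy⟩

lemma Usc.max_cont {g f : X → ℝ} (hg : Usc g) (hf : Continuous f) :
    Usc (fun x => max (g x) (f x)) := by
  intro x c hc
  rcases max_lt_iff.1 hc with ⟨h1, h2⟩
  obtain ⟨U, hU, hxU, hUc⟩ := hg x c h1
  refine ⟨U ∩ f ⁻¹' Iio c, hU.inter (isOpen_Iio.preimage hf), ⟨hxU, h2⟩, ?_⟩
  intro y hy
  exact max_lt (hUc y hy.1) hy.2

lemma Lsc.min_cont {h f : X → ℝ} (hh : Lsc h) (hf : Continuous f) :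
    Lsc (fun x => min (h x) (f x)) := by
  intro x c hc
  rcases lt_min_iff.1 hc with ⟨h1, h2⟩
  obtain ⟨U, hU, hxU, hUc⟩ := hh x c h1
  refine ⟨U ∩ f ⁻¹' Ioi c, hU.inter (isOpen_Ioi.preimage hf), ⟨hxU, h2⟩, ?_⟩
  intro y hy
  exact lt_min (hUc y hy.1) hy.2

lemma insertion_step [NormalSpace X] (n : ℕ) (hn : 0 < n) {g h : X → ℝ}
    (hg : Usc g) (hh : Lsc h) (hgh : ∀ x, g x ≤ h x)
    (hg0 : ∀ x, 0 ≤ g x) (hg1 : ∀ x, g x ≤ 1) (hh0 : ∀ x, 0 ≤ h x) (hh1 : ∀ x, h x ≤ 1) :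
    ∃ f : X → ℝ, Continuous f ∧
      ∀ x, g x - 1/n ≤ f x ∧ f x ≤ h x + 1/n ∧ 0 ≤ f x ∧ f x ≤ 1 := by
  classical
  have hnR : (0:ℝ) < n := by exact_mod_cast hn
  -- Urysohn functions
  have hury : ∀ k : ℕ, ∃ φ : C(X, ℝ), Set.EqOn φ 0 ({x | (k:ℝ)/n < h x}ᶜ) ∧
      Set.EqOn φ 1 {x | ((k:ℝ)+1)/n ≤ g x} ∧ ∀ x, φ x ∈ Icc (0:ℝ) 1 := by
    intro k
    have hC : IsClosed {x | ((k:ℝ)+1)/n ≤ g x} := by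
      have h1 : IsOpen {x | g x < ((k:ℝ)+1)/n} := hg.isOpen_lt (((k:ℝ)+1)/n)
      have heq : {x | ((k:ℝ)+1)/n ≤ g x} = {x | g x < ((k:ℝ)+1)/n}ᶜ := by
        ext y; simp [not_lt]
      rw [heq]; exact h1.isClosed_compl
    have hO : IsClosed ({x | (k:ℝ)/n < h x}ᶜ) := (hh.isOpen_gt _).isClosed_compl
    have hdisj : Disjoint ({x | (k:ℝ)/n < h x}ᶜ) {x | ((k:ℝ)+1)/n ≤ g x} := by
      rw [Set.disjoint_left]
      intro x hx1 hx2
      apply hx1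
      have hlt : (k:ℝ)/n < ((k:ℝ)+1)/n := by
        apply div_lt_div_of_pos_right (by linarith) hnR
      exact lt_of_lt_of_le hlt (le_trans hx2 (hgh x))
    exact exists_continuous_zero_one_of_isClosed hO hC hdisj
  choose φ hφ0 hφ1 hφm using hury
  set f : X → ℝ := fun x => (∑ k ∈ Finset.range n, φ k x) / n with hf
  refine ⟨f, (continuous_finset_sum _ fun k _ => (φ k).continuous).div_const _, ?_⟩
  intro x
  set A := ∑ k ∈ Finset.range n, φ k x with hA
  have hA0 : (0:ℝ) ≤ A := Finset.sum_nonneg fun k _ => (hφm k x).1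
  have hA1 : A ≤ n := by
    calc A ≤ ∑ k ∈ Finset.range n, 1 := Finset.sum_le_sum fun k _ => (hφm k x).2
    _ = n := by simp
  have lower : (n:ℝ) * g x - 1 ≤ A := by
    set m := min n ⌊(n:ℝ) * g x⌋₊ with hm
    have hones : ∀ k < m, φ k x = 1 := by
      intro k hk
      have hk2 : k < ⌊(n:ℝ) * g x⌋₊ := lt_of_lt_of_le hk (min_le_right _ _)
      have hle : ((k:ℝ)+1)/n ≤ g x := by
        rw [div_le_iff₀ hnR]
        have h1 : ((k:ℝ)+1) ≤ (⌊(n:ℝ) * g x⌋₊ : ℝ) := by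
          have h2 : (k+1 : ℕ) ≤ ⌊(n:ℝ) * g x⌋₊ := hk2
          exact_mod_cast h2
        have h2 : ((⌊(n:ℝ) * g x⌋₊ : ℝ)) ≤ (n:ℝ) * g x :=
          Nat.floor_le (mul_nonneg hnR.le (hg0 x))
        nlinarith
      exact hφ1 k hle
    have hsub : (m:ℝ) ≤ A := by
      have hs : ∑ k ∈ Finset.range m, φ k x ≤ A := by
        apply Finset.sum_le_sum_of_subset_of_nonneg
        · exact Finset.range_subset_range.2 (min_le_left _ _)
        · intro k _ _; exact (hφm k x).1
      calc (m:ℝ) = ∑ k ∈ Finset.range m, (1:ℝ) := by simp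
      _ = ∑ k ∈ Finset.range m, φ k x := by
          refine (Finset.sum_congr rfl ?_).symm
          intro k hk; exact hones k (Finset.mem_range.1 hk)
      _ ≤ A := hs
    rcases le_or_gt (n:ℕ) ⌊(n:ℝ) * g x⌋₊ with hc | hc
    · have hmeq : m = n := min_eq_left hc
      rw [hmeq] at hsub
      nlinarith [hg1 x, hg0 x]
    · have hmeq : m = ⌊(n:ℝ) * g x⌋₊ := min_eq_right hc.le
      have hfl : (n:ℝ) * g x < (⌊(n:ℝ) * g x⌋₊ : ℝ) + 1 := Nat.lt_floor_add_one _
      rw [hmeq] at hsub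
      linarith
  have upper : A ≤ (n:ℝ) * h x + 1 := by
    have hbound : ∀ k ∈ Finset.range n, φ k x ≤ if ((k:ℝ))/n < h x then 1 else 0 := by
      intro k _
      by_cases hk : ((k:ℝ))/n < h x
      · simp only [hk, if_true]; exact (hφm k x).2
      · simp only [hk, if_false]
        have hmem : x ∈ {x | (k:ℝ)/n < h x}ᶜ := hk
        have := hφ0 k hmem
        simpa using this.le
    have hs1 : A ≤ ∑ k ∈ Finset.range n, if ((k:ℝ))/n < h x then (1:ℝ) else 0 :=
      Finset.sum_le_sum hbound
    have hcard : ∑ k ∈ Finset.range n, (if ((k:ℝ))/n < h x then (1:ℝ) else 0) =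
        (((Finset.range n).filter (fun k : ℕ => ((k:ℝ))/n < h x)).card : ℝ) := by
      rw [Finset.sum_boole]
    have hsubset : ((Finset.range n).filter (fun k : ℕ => ((k:ℝ))/n < h x)) ⊆
        Finset.range (⌊(n:ℝ) * h x⌋₊ + 1) := by
      intro k hk
      rcases Finset.mem_filter.1 hk with ⟨_, hk2⟩
      rw [Finset.mem_range, Nat.lt_succ_iff]
      apply Nat.le_floor
      rw [div_lt_iff₀ hnR] at hk2
      nlinarith
    have hcard2 : (((Finset.range n).filter (fun k : ℕ => ((k:ℝ))/n < h x)).card : ℝ) ≤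
        (⌊(n:ℝ) * h x⌋₊ : ℝ) + 1 := by
      have := Finset.card_le_card hsubset
      have h2 : ((Finset.range n).filter (fun k : ℕ => ((k:ℝ))/n < h x)).card ≤
          ⌊(n:ℝ) * h x⌋₊ + 1 := by simpa using this
      exact_mod_cast h2
    have hfl : (⌊(n:ℝ) * h x⌋₊ : ℝ) ≤ (n:ℝ) * h x := Nat.floor_le (mul_nonneg hnR.le (hh0 x))
    calc A ≤ _ := hs1
    _ = _ := hcard
    _ ≤ (⌊(n:ℝ) * h x⌋₊ : ℝ) + 1 := hcard2
    _ ≤ (n:ℝ) * h x + 1 := by linarith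
  have hfx : f x = A / n := rfl
  refine ⟨?_, ?_, ?_, ?_⟩
  · rw [hfx, le_div_iff₀ hnR]
    have hexp : (g x - 1/(n:ℝ)) * n = n * g x - 1 := by field_simp
    linarith
  · rw [hfx, div_le_iff₀ hnR]
    have hexp : (h x + 1/(n:ℝ)) * n = n * h x + 1 := by field_simp
    linarith
  · rw [hfx]; positivity
  · rw [hfx, div_le_one hnR]; exact hA1

end Insertion

section Insertion2
variable {X : Type*} [TopologicalSpace X]

structure InsPack (X : Type*) [TopologicalSpace X] (g h : X → ℝ) where
  lo : X → ℝ
  hi : X → ℝ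
  husc : Usc lo
  hlsc : Lsc hi
  hle : ∀ x, lo x ≤ hi x
  lo0 : ∀ x, 0 ≤ lo x
  lo1 : ∀ x, lo x ≤ 1
  hi0 : ∀ x, 0 ≤ hi x
  hi1 : ∀ x, hi x ≤ 1
  ge_g : ∀ x, g x ≤ lo x
  le_h : ∀ x, hi x ≤ h x

lemma pack_step [NormalSpace X] {g h : X → ℝ} (p : InsPack X g h) (n : ℕ) :
    ∃ (f : X → ℝ) (q : InsPack X g h), Continuous f ∧
      (∀ x, p.lo x - (2:ℝ)⁻¹^n ≤ f x ∧ f x ≤ p.hi x + (2:ℝ)⁻¹^n ∧ 0 ≤ f x ∧ f x ≤ 1) ∧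
      (∀ x, f x - (2:ℝ)⁻¹^n ≤ q.lo x) ∧ (∀ x, q.hi x ≤ f x + (2:ℝ)⁻¹^n) := by
  have h2n : (1:ℝ)/((2^n : ℕ) : ℝ) = (2:ℝ)⁻¹^n := by
    rw [Nat.cast_pow]
    rw [one_div, ← inv_pow]
    norm_num
  obtain ⟨f, hfc, hfb⟩ := insertion_step (2^n) (Nat.pow_pos (by norm_num))
    p.husc p.hlsc p.hle p.lo0 p.lo1 p.hi0 p.hi1
  rw [h2n] at hfb
  set ε := (2:ℝ)⁻¹^n with hε
  have hε0 : 0 ≤ ε := by positivity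
  refine ⟨f, ⟨fun x => max (p.lo x) (f x - ε), fun x => min (p.hi x) (f x + ε),
    p.husc.max_cont (hfc.sub continuous_const),
    p.hlsc.min_cont (hfc.add continuous_const),
    ?_, ?_, ?_, ?_, ?_, ?_, ?_⟩, hfc, hfb, ?_, ?_⟩
  · intro x
    rcases hfb x with ⟨h1, h2, _, _⟩
    refine max_le (le_min (p.hle x) (by linarith)) (le_min (by linarith) (by linarith))
  · intro x; exact le_trans (p.lo0 x) (le_max_left _ _)
  · intro x
    exact max_le (p.lo1 x) (by rcases hfb x with ⟨_, _, _, h4⟩; linarith)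
  · intro x
    exact le_min (p.hi0 x) (by rcases hfb x with ⟨_, _, h3, _⟩; linarith)
  · intro x; exact le_trans (min_le_left _ _) (p.hi1 x)
  · intro x; exact le_trans (p.ge_g x) (le_max_left _ _)
  · intro x; exact le_trans (min_le_left _ _) (p.le_h x)
  · intro x; exact le_max_right _ _
  · intro x; exact min_le_right _ _

theorem insertion01 [NormalSpace X] {g h : X → ℝ} (hg : Usc g) (hh : Lsc h)
    (hgh : ∀ x, g x ≤ h x) (hg0 : ∀ x, 0 ≤ g x) (hg1 : ∀ x, g x ≤ 1)
    (hh0 : ∀ x, 0 ≤ h x) (hh1 : ∀ x, h x ≤ 1) :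
    ∃ f : X → ℝ, Continuous f ∧ ∀ x, g x ≤ f x ∧ f x ≤ h x := by
  classical
  set ε : ℕ → ℝ := fun n => (2:ℝ)⁻¹^n with hεdef
  have hε0 : ∀ n, 0 ≤ ε n := fun n => by positivity
  let step : ∀ (_ : ℕ), InsPack X g h → (X → ℝ) × InsPack X g h := fun n p =>
    ⟨(pack_step p n).choose, (pack_step p n).choose_spec.choose⟩
  have hstep : ∀ n p, Continuous (step n p).1 ∧
      (∀ x, p.lo x - ε n ≤ (step n p).1 x ∧ (step n p).1 x ≤ p.hi x + ε n ∧
        0 ≤ (step n p).1 x ∧ (step n p).1 x ≤ 1) ∧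
      (∀ x, (step n p).1 x - ε n ≤ (step n p).2.lo x) ∧
      (∀ x, (step n p).2.hi x ≤ (step n p).1 x + ε n) := fun n p =>
    (pack_step p n).choose_spec.choose_spec
  let p0 : InsPack X g h := ⟨g, h, hg, hh, hgh, hg0, hg1, hh0, hh1, fun x => le_refl _,
    fun x => le_refl _⟩
  let seq : ℕ → (X → ℝ) × InsPack X g h := fun n =>
    Nat.rec ⟨fun _ => 0, p0⟩ (fun n ih => step n ih.2) n
  have hseq : ∀ n, seq (n+1) = step n (seq n).2 := fun n => rfl
  set Fn : ℕ → X → ℝ := fun n => (seq (n+1)).1 with hFn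
  set Pn : ℕ → InsPack X g h := fun n => (seq n).2 with hPn
  have hPsucc : ∀ n, Pn (n+1) = (step n (Pn n)).2 := fun n => rfl
  have hFeq : ∀ n, Fn n = (step n (Pn n)).1 := fun n => rfl
  have hFc : ∀ n, Continuous (Fn n) := fun n => (hstep n (Pn n)).1
  have hFb : ∀ n x, (Pn n).lo x - ε n ≤ Fn n x ∧ Fn n x ≤ (Pn n).hi x + ε n :=
    fun n x => ⟨((hstep n (Pn n)).2.1 x).1, ((hstep n (Pn n)).2.1 x).2.1⟩
  have hQlo : ∀ n x, Fn n x - ε n ≤ (Pn (n+1)).lo x := fun n x => (hstep n (Pn n)).2.2.1 x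
  have hQhi : ∀ n x, (Pn (n+1)).hi x ≤ Fn n x + ε n := fun n x => (hstep n (Pn n)).2.2.2 x
  -- difference bound
  have hdiff : ∀ n x, |Fn (n+1) x - Fn n x| ≤ ε n + ε (n+1) := by
    intro n x
    rcases hFb (n+1) x with ⟨h1, h2⟩
    have h3 := hQlo n x
    have h4 := hQhi n x
    rw [abs_le]
    constructor <;> nlinarith
  have hdiff2 : ∀ n x, ‖Fn (n+1) x - Fn n x‖ ≤ 2 * (2:ℝ)⁻¹^n := by
    intro n x
    rw [Real.norm_eq_abs]
    refine le_trans (hdiff n x) ?_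
    have : ε (n+1) ≤ ε n := by
      simp only [hεdef]
      apply pow_le_pow_of_le_one (by norm_num) (by norm_num) (by omega)
    simp only [hεdef] at *
    linarith
  have hsum : Summable (fun n => 2 * (2:ℝ)⁻¹^n) :=
    (summable_geometric_of_lt_one (by norm_num) (by norm_num)).mul_left 2
  set D : ℕ → X → ℝ := fun n x => Fn (n+1) x - Fn n x with hD
  have hDc : ∀ n, Continuous (D n) := fun n => (hFc (n+1)).sub (hFc n)
  set F : X → ℝ := fun x => Fn 0 x + ∑' n, D n x with hF
  have hFcont : Continuous F :=
    (hFc 0).add (continuous_tsum hDc hsum (fun n x => hdiff2 n x))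
  have htend : ∀ x, Tendsto (fun n => Fn n x) atTop (𝓝 (F x)) := by
    intro x
    have hsx : Summable (fun n => D n x) := by
      apply Summable.of_norm_bounded hsum (fun n => hdiff2 n x)
    have := hsx.hasSum.tendsto_sum_nat
    have heq : ∀ n, ∑ i ∈ Finset.range n, D i x = Fn n x - Fn 0 x := by
      intro n
      exact Finset.sum_range_sub (fun i => Fn i x) n
    rw [Metric.tendsto_atTop] at this ⊢
    intro δ hδ
    obtain ⟨N, hN⟩ := this δ hδ
    refine ⟨N, fun n hn => ?_⟩
    have h5 := hN n hn
    rw [heq n, Real.dist_eq] at h5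
    rw [Real.dist_eq]
    have he : Fn n x - F x = (Fn n x - Fn 0 x) - ∑' (b:ℕ), D b x := by
      simp only [hF]; ring
    rw [he]; exact h5
  refine ⟨F, hFcont, fun x => ⟨?_, ?_⟩⟩
  · have hlo : ∀ n, g x - ε n ≤ Fn n x := by
      intro n
      have := (hFb n x).1
      have := (Pn n).ge_g x
      linarith
    have htg : Tendsto (fun n => g x - ε n) atTop (𝓝 (g x)) := by
      have : Tendsto ε atTop (𝓝 0) :=
        tendsto_pow_atTop_nhds_zero_of_lt_one (by norm_num) (by norm_num)
      simpa using tendsto_const_nhds.sub this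
    exact le_of_tendsto_of_tendsto' htg (htend x) hlo
  · have hhi : ∀ n, Fn n x ≤ h x + ε n := by
      intro n
      have := (hFb n x).2
      have := (Pn n).le_h x
      linarith
    have hth : Tendsto (fun n => h x + ε n) atTop (𝓝 (h x)) := by
      have : Tendsto ε atTop (𝓝 0) :=
        tendsto_pow_atTop_nhds_zero_of_lt_one (by norm_num) (by norm_num)
      simpa using tendsto_const_nhds.add this
    exact le_of_tendsto_of_tendsto' (htend x) hth hhi

end Insertion2

section Squash

/-- The order-preserving squashing map `ℝ → (-1, 1)`. -/
noncomputable def tsq (y : ℝ) : ℝ := y / (1 + |y|)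

lemma tsq_cont : Continuous tsq := by
  apply Continuous.div continuous_id (by continuity)
  intro y
  have : 0 ≤ |y| := abs_nonneg y
  intro h; linarith

lemma tsq_strictMono : StrictMono tsq := by
  intro a b hab
  rcases le_or_gt 0 a with ha | ha
  · have hb : 0 < b := lt_of_le_of_lt ha hab
    rw [tsq, tsq, abs_of_nonneg ha, abs_of_pos hb, div_lt_div_iff₀ (by linarith) (by linarith)]
    nlinarith
  · rcases le_or_gt 0 b with hb | hb
    · have h1 : tsq a < 0 := div_neg_of_neg_of_pos ha (by have := abs_nonneg a; linarith)
      have h2 : 0 ≤ tsq b := div_nonneg hb (by have := abs_nonneg b; linarith)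
      linarith
    · rw [tsq, tsq, abs_of_neg ha, abs_of_neg hb, div_lt_div_iff₀ (by linarith) (by linarith)]
      nlinarith

lemma tsq_abs_lt_one (y : ℝ) : |tsq y| < 1 := by
  rw [tsq, abs_div, abs_of_pos (by have := abs_nonneg y; linarith : (0:ℝ) < 1 + |y|)]
  rw [div_lt_one (by have := abs_nonneg y; linarith)]
  linarith [abs_nonneg y]

lemma tsq_lt_one (y : ℝ) : tsq y < 1 := (abs_lt.1 (tsq_abs_lt_one y)).2

lemma neg_one_lt_tsq (y : ℝ) : -1 < tsq y := (abs_lt.1 (tsq_abs_lt_one y)).1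

lemma tsq_section {z : ℝ} (hz : |z| < 1) : tsq (z / (1 - |z|)) = z := by
  rcases le_or_gt 0 z with h0 | h0
  · rw [abs_of_nonneg h0] at hz ⊢
    have h1 : (0:ℝ) < 1 - z := by linarith
    rw [tsq, abs_of_nonneg (div_nonneg h0 h1.le)]
    have h2 : 1 + z / (1 - z) = 1 / (1 - z) := by field_simp; ring
    rw [h2]
    field_simp
  · have hz1 : -1 < z := (abs_lt.1 hz).1
    rw [abs_of_neg h0] at *
    have h1 : (0:ℝ) < 1 + z := by linarith
    have hw : z / (1 - -z) < 0 := div_neg_of_neg_of_pos h0 (by linarith)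
    rw [tsq, abs_of_neg hw]
    have h2 : 1 + -(z / (1 - -z)) = 1 / (1 + z) := by
      rw [show (1:ℝ) - -z = 1 + z by ring]; field_simp; ring
    rw [h2]
    rw [show (1:ℝ) - -z = 1 + z by ring]
    field_simp

end Squash

section CuscoBasics
variable {X : Type*} [TopologicalSpace X]

/-- Lower envelope of a set-valued map. -/
noncomputable def lowEnv (F : Set (X × ℝ)) (x : X) : ℝ := sInf (valuesAt F x)
/-- Upper envelope of a set-valued map. -/
noncomputable def upEnv (F : Set (X × ℝ)) (x : X) : ℝ := sSup (valuesAt F x)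

variable {F : Set (X × ℝ)}

lemma IsCusco.low_mem (hF : IsCusco F) (x : X) : lowEnv F x ∈ valuesAt F x :=
  (hF.2 x).2.1.sInf_mem (hF.2 x).1

lemma IsCusco.up_mem (hF : IsCusco F) (x : X) : upEnv F x ∈ valuesAt F x :=
  (hF.2 x).2.1.sSup_mem (hF.2 x).1

lemma IsCusco.low_le_up (hF : IsCusco F) (x : X) : lowEnv F x ≤ upEnv F x :=
  csInf_le_csSup (hF.2 x).1 (hF.2 x).2.1.bddBelow (hF.2 x).2.1.bddAbove

lemma IsCusco.values_eq_Icc (hF : IsCusco F) (x : X) :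
    valuesAt F x = Set.Icc (lowEnv F x) (upEnv F x) := by
  apply Set.Subset.antisymm
  · intro y hy
    exact ⟨csInf_le (hF.2 x).2.1.bddBelow hy, le_csSup (hF.2 x).2.1.bddAbove hy⟩
  · exact (hF.2 x).2.2.ordConnected.out (hF.low_mem x) (hF.up_mem x)

lemma IsCusco.usc_up (hF : IsCusco F) : Usc (upEnv F) := by
  intro x c hc
  set c' := (upEnv F x + c) / 2 with hc'
  have h1 : upEnv F x < c' := by rw [hc']; linarith
  have h2 : c' < c := by rw [hc']; linarith
  have hsub : valuesAt F x ⊆ Set.Iio c' := by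
    intro y hy
    exact lt_of_le_of_lt (le_csSup (hF.2 x).2.1.bddAbove hy) h1
  obtain ⟨U, hU, hxU, hUV⟩ := hF.1 x _ isOpen_Iio hsub
  refine ⟨U, hU, hxU, fun y hy => ?_⟩
  have : upEnv F y ≤ c' := csSup_le (hF.2 y).1 (fun z hz => (hUV y hy hz).le)
  linarith

lemma IsCusco.lsc_low (hF : IsCusco F) : Lsc (lowEnv F) := by
  intro x c hc
  set c' := (lowEnv F x + c) / 2 with hc'
  have h1 : c' < lowEnv F x := by rw [hc']; linarith
  have h2 : c < c' := by rw [hc']; linarith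
  have hsub : valuesAt F x ⊆ Set.Ioi c' := by
    intro y hy
    exact lt_of_lt_of_le h1 (csInf_le (hF.2 x).2.1.bddBelow hy)
  obtain ⟨U, hU, hxU, hUV⟩ := hF.1 x _ isOpen_Ioi hsub
  refine ⟨U, hU, hxU, fun y hy => ?_⟩
  have : c' ≤ lowEnv F y := le_csInf (hF.2 y).1 (fun z hz => (hUV y hy hz).le)
  linarith

end CuscoBasics

section Tubes
variable {X : Type*} [TopologicalSpace X]

/-- A "tube" for `F` inside `W`: an open set `U` and an interval `[a,b]` such that the whole
box `U × [a,b]` lies in `W` and all values of `F` over `U` lie in `[a,b]`. -/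
def TubeD (W F : Set (X × ℝ)) (U : Set X) (a b : ℝ) : Prop :=
  IsOpen U ∧ (∀ u ∈ U, ∀ y ∈ Set.Icc a b, (u, y) ∈ W) ∧
    ∀ u ∈ U, valuesAt F u ⊆ Set.Icc a b

variable {W F : Set (X × ℝ)}

lemma tube_exists (hF : IsCusco F) (hW : IsOpen W) (hFW : F ⊆ W) (x : X) :
    ∃ U a b, TubeD W F U a b ∧ x ∈ U ∧ a < lowEnv F x ∧ upEnv F x < b := by
  set l := lowEnv F x
  set u := upEnv F x
  -- the vertical slice of W at x is open and contains [l,u]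
  have hslice : IsOpen {y : ℝ | (x, y) ∈ W} :=
    hW.preimage (Continuous.prodMk_right x)
  have hIcc_sub : Set.Icc l u ⊆ {y : ℝ | (x, y) ∈ W} := by
    intro y hy
    have : y ∈ valuesAt F x := by rw [hF.values_eq_Icc x]; exact hy
    exact hFW this
  obtain ⟨δ, hδ0, hδ⟩ := isCompact_Icc.exists_cthickening_subset_open hslice hIcc_sub
  have hmargin : Set.Icc (l - δ) (u + δ) ⊆ {y : ℝ | (x, y) ∈ W} := by
    intro y hy
    apply hδ
    have hlu : l ≤ u := hF.low_le_up x
    rcases lt_or_ge y l with h1 | h1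
    · refine Metric.mem_cthickening_of_dist_le y l δ _ ⟨le_refl l, hlu⟩ ?_
      rw [Real.dist_eq, abs_of_nonpos (by linarith)]
      linarith [hy.1]
    · rcases le_or_gt y u with h2 | h2
      · refine Metric.mem_cthickening_of_dist_le y y δ _ ⟨h1, h2⟩ ?_
        simp [hδ0.le]
      · refine Metric.mem_cthickening_of_dist_le y u δ _ ⟨hlu, le_refl u⟩ ?_
        rw [Real.dist_eq, abs_of_nonneg (by linarith)]
        linarith [hy.2]
  -- tube lemma: a horizontal neighborhood
  have hbox : ({x} : Set X) ×ˢ Set.Icc (l - δ) (u + δ) ⊆ W := by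
    rintro ⟨x', y⟩ ⟨hx', hy⟩
    rcases hx' with rfl
    exact hmargin hy
  obtain ⟨U1, V1, hU1, hV1, hxU1, hIccV1, hUV1⟩ :=
    generalized_tube_lemma isCompact_singleton isCompact_Icc hW hbox
  -- upper semicontinuity neighborhood
  have hsub2 : valuesAt F x ⊆ Set.Ioo (l - δ) (u + δ) := by
    rw [hF.values_eq_Icc x]
    intro y hy
    exact ⟨by linarith [hy.1], by linarith [hy.2]⟩
  obtain ⟨U2, hU2, hxU2, hUV2⟩ := hF.1 x _ isOpen_Ioo hsub2
  refine ⟨U1 ∩ U2, l - δ, u + δ, ⟨hU1.inter hU2, ?_, ?_⟩, ⟨hxU1 rfl, hxU2⟩,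
    by linarith, by linarith⟩
  · intro v hv y hy
    exact hUV1 ⟨hv.1, hIccV1 hy⟩
  · intro v hv y hy
    exact Set.Ioo_subset_Icc_self (hUV2 v hv.2 hy)

/-- Compressed lower bound function built from tubes. -/
noncomputable def gHat (W F : Set (X × ℝ)) (x : X) : ℝ :=
  sInf (tsq '' {a | ∃ U b, TubeD W F U a b ∧ x ∈ U})

/-- Compressed upper bound function built from tubes. -/
noncomputable def hHat (W F : Set (X × ℝ)) (x : X) : ℝ :=
  sSup (tsq '' {b | ∃ U a, TubeD W F U a b ∧ x ∈ U})

lemma gHat_set_nonempty (hF : IsCusco F) (hW : IsOpen W) (hFW : F ⊆ W) (x : X) :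
    (tsq '' {a | ∃ U b, TubeD W F U a b ∧ x ∈ U}).Nonempty := by
  obtain ⟨U, a, b, ht, hx, _, _⟩ := tube_exists hF hW hFW x
  exact ⟨tsq a, a, ⟨U, b, ht, hx⟩, rfl⟩

lemma hHat_set_nonempty (hF : IsCusco F) (hW : IsOpen W) (hFW : F ⊆ W) (x : X) :
    (tsq '' {b | ∃ U a, TubeD W F U a b ∧ x ∈ U}).Nonempty := by
  obtain ⟨U, a, b, ht, hx, _, _⟩ := tube_exists hF hW hFW x
  exact ⟨tsq b, b, ⟨U, a, ht, hx⟩, rfl⟩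

lemma gHat_bddBelow (x : X) :
    BddBelow (tsq '' {a | ∃ U b, TubeD W F U a b ∧ x ∈ U}) := by
  refine ⟨-1, ?_⟩
  rintro z ⟨a, _, rfl⟩
  exact (neg_one_lt_tsq a).le

lemma hHat_bddAbove (x : X) :
    BddAbove (tsq '' {b | ∃ U a, TubeD W F U a b ∧ x ∈ U}) := by
  refine ⟨1, ?_⟩
  rintro z ⟨b, _, rfl⟩
  exact (tsq_lt_one b).le

lemma neg_one_le_gHat (hF : IsCusco F) (hW : IsOpen W) (hFW : F ⊆ W) (x : X) :
    -1 ≤ gHat W F x :=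
  le_csInf (gHat_set_nonempty hF hW hFW x) (by rintro z ⟨a, _, rfl⟩; exact (neg_one_lt_tsq a).le)

lemma hHat_le_one (hF : IsCusco F) (hW : IsOpen W) (hFW : F ⊆ W) (x : X) :
    hHat W F x ≤ 1 :=
  csSup_le (hHat_set_nonempty hF hW hFW x) (by rintro z ⟨b, _, rfl⟩; exact (tsq_lt_one b).le)

lemma gHat_lt_low (hF : IsCusco F) (hW : IsOpen W) (hFW : F ⊆ W) (x : X) :
    gHat W F x < tsq (lowEnv F x) := by
  obtain ⟨U, a, b, ht, hx, ha, _⟩ := tube_exists hF hW hFW x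
  exact lt_of_le_of_lt (csInf_le (gHat_bddBelow x) ⟨a, ⟨U, b, ht, hx⟩, rfl⟩)
    (tsq_strictMono ha)

lemma up_lt_hHat (hF : IsCusco F) (hW : IsOpen W) (hFW : F ⊆ W) (x : X) :
    tsq (upEnv F x) < hHat W F x := by
  obtain ⟨U, a, b, ht, hx, _, hb⟩ := tube_exists hF hW hFW x
  exact lt_of_lt_of_le (tsq_strictMono hb)
    (le_csSup (hHat_bddAbove x) ⟨b, ⟨U, a, ht, hx⟩, rfl⟩)

lemma usc_gHat (hF : IsCusco F) (hW : IsOpen W) (hFW : F ⊆ W) : Usc (gHat W F) := by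
  intro x c hc
  obtain ⟨z, ⟨a, ⟨U, b, ht, hxU⟩, rfl⟩, hz⟩ :=
    exists_lt_of_csInf_lt (gHat_set_nonempty hF hW hFW x) hc
  refine ⟨U, ht.1, hxU, fun y hy => ?_⟩
  exact lt_of_le_of_lt (csInf_le (gHat_bddBelow y) ⟨a, ⟨U, b, ht, hy⟩, rfl⟩) hz

lemma lsc_hHat (hF : IsCusco F) (hW : IsOpen W) (hFW : F ⊆ W) : Lsc (hHat W F) := by
  intro x c hc
  obtain ⟨z, ⟨b, ⟨U, a, ht, hxU⟩, rfl⟩, hz⟩ :=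
    exists_lt_of_lt_csSup (hHat_set_nonempty hF hW hFW x) hc
  refine ⟨U, ht.1, hxU, fun y hy => ?_⟩
  exact lt_of_lt_of_le hz (le_csSup (hHat_bddAbove y) ⟨b, ⟨U, a, ht, hy⟩, rfl⟩)

/-- Membership in all values: strictly between the hat functions. -/
lemma between_of_mem_values (hF : IsCusco F) (hW : IsOpen W) (hFW : F ⊆ W) {x : X} {y : ℝ}
    (hy : y ∈ valuesAt F x) : gHat W F x < tsq y ∧ tsq y < hHat W F x := by
  rw [hF.values_eq_Icc x] at hy
  constructor
  · exact lt_of_lt_of_le (gHat_lt_low hF hW hFW x) (tsq_strictMono.monotone hy.1)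
  · exact lt_of_le_of_lt (tsq_strictMono.monotone hy.2) (up_lt_hHat hF hW hFW x)

/-- The key property: any point strictly between the hat functions lies in `W`. -/
lemma mem_W_of_between (hF : IsCusco F) (hW : IsOpen W) (hFW : F ⊆ W) {x : X} {y : ℝ}
    (h1 : gHat W F x < tsq y) (h2 : tsq y < hHat W F x) : (x, y) ∈ W := by
  rcases lt_or_ge y (lowEnv F x) with hy | hy
  · obtain ⟨z, ⟨a, ⟨U, b, ht, hxU⟩, rfl⟩, hz⟩ :=
      exists_lt_of_csInf_lt (gHat_set_nonempty hF hW hFW x) h1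
    have ha : a < y := tsq_strictMono.lt_iff_lt.1 hz
    have hvals : valuesAt F x ⊆ Set.Icc a b := ht.2.2 x hxU
    have hub : upEnv F x ≤ b := by
      have := hvals (hF.up_mem x)
      exact this.2
    refine ht.2.1 x hxU y ⟨ha.le, ?_⟩
    calc y ≤ lowEnv F x := hy.le
    _ ≤ upEnv F x := hF.low_le_up x
    _ ≤ b := hub
  · rcases le_or_gt y (upEnv F x) with hy2 | hy2
    · exact hFW (show y ∈ valuesAt F x by rw [hF.values_eq_Icc x]; exact ⟨hy, hy2⟩)
    · obtain ⟨z, ⟨b, ⟨U, a, ht, hxU⟩, rfl⟩, hz⟩ :=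
        exists_lt_of_lt_csSup (hHat_set_nonempty hF hW hFW x) h2
      have hb : y < b := tsq_strictMono.lt_iff_lt.1 hz
      have hvals : valuesAt F x ⊆ Set.Icc a b := ht.2.2 x hxU
      have hlb : a ≤ lowEnv F x := (hvals (hF.low_mem x)).1
      refine ht.2.1 x hxU y ⟨?_, hb.le⟩
      calc a ≤ lowEnv F x := hlb
      _ ≤ upEnv F x := hF.low_le_up x
      _ ≤ y := hy2.le

end Tubes

section Base
variable {X : Type*} [TopologicalSpace X]

theorem insertion_pm1 [NormalSpace X] {g h : X → ℝ} (hg : Usc g) (hh : Lsc h)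
    (hgh : ∀ x, g x ≤ h x) (hgm : ∀ x, -1 ≤ g x) (hgM : ∀ x, g x ≤ 1)
    (hhm : ∀ x, -1 ≤ h x) (hhM : ∀ x, h x ≤ 1) :
    ∃ f : X → ℝ, Continuous f ∧ ∀ x, g x ≤ f x ∧ f x ≤ h x := by
  have hg' : Usc (fun x => (g x + 1) / 2) := by
    intro x c hc
    obtain ⟨U, h1, h2, h3⟩ := hg x (2 * c - 1) (by linarith)
    exact ⟨U, h1, h2, fun y hy => by have := h3 y hy; linarith⟩
  have hh' : Lsc (fun x => (h x + 1) / 2) := by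
    intro x c hc
    obtain ⟨U, h1, h2, h3⟩ := hh x (2 * c - 1) (by linarith)
    exact ⟨U, h1, h2, fun y hy => by have := h3 y hy; linarith⟩
  obtain ⟨f', hf'c, hf'⟩ := insertion01 hg' hh'
    (fun x => by have := hgh x; linarith)
    (fun x => by have := hgm x; linarith)
    (fun x => by have := hgM x; linarith)
    (fun x => by have := hhm x; linarith)
    (fun x => by have := hhM x; linarith)
  refine ⟨fun x => 2 * f' x - 1, by continuity, fun x => ?_⟩
  rcases hf' x with ⟨h1, h2⟩
  constructor <;> [skip; skip] <;> · simp only at h1 h2 ⊢; linarith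

lemma Lsc.tsq_comp {l : X → ℝ} (hl : Lsc l) : Lsc (fun x => tsq (l x)) := by
  intro x c hc
  have hopen : IsOpen (tsq ⁻¹' Set.Ioi c) := isOpen_Ioi.preimage tsq_cont
  obtain ⟨ε, hε0, hball⟩ := Metric.isOpen_iff.1 hopen (l x) hc
  have hy0 : c < tsq (l x - ε / 2) := by
    have : l x - ε / 2 ∈ Metric.ball (l x) ε := by
      rw [Metric.mem_ball, Real.dist_eq, abs_of_nonpos (by linarith)]
      linarith
    exact hball this
  obtain ⟨U, h1, h2, h3⟩ := hl x (l x - ε / 2) (by linarith)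
  refine ⟨U, h1, h2, fun y hy => ?_⟩
  exact lt_trans hy0 (tsq_strictMono (h3 y hy))

lemma Usc.tsq_comp {u : X → ℝ} (hu : Usc u) : Usc (fun x => tsq (u x)) := by
  intro x c hc
  have hopen : IsOpen (tsq ⁻¹' Set.Iio c) := isOpen_Iio.preimage tsq_cont
  obtain ⟨ε, hε0, hball⟩ := Metric.isOpen_iff.1 hopen (u x) hc
  have hy0 : tsq (u x + ε / 2) < c := by
    have : u x + ε / 2 ∈ Metric.ball (u x) ε := by
      rw [Metric.mem_ball, Real.dist_eq, abs_of_nonneg (by linarith)]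
      linarith
    exact hball this
  obtain ⟨U, h1, h2, h3⟩ := hu x (u x + ε / 2) (by linarith)
  refine ⟨U, h1, h2, fun y hy => ?_⟩
  exact lt_trans (tsq_strictMono (h3 y hy)) hy0

variable {W F : Set (X × ℝ)}

lemma base_exists [NormalSpace X] (hF : IsCusco F) (hW : IsOpen W) (hFW : F ⊆ W) :
    ∃ f : X → ℝ, Continuous f ∧
      ∀ x, gHat W F x < tsq (f x) ∧ tsq (f x) < hHat W F x := by
  -- first insertion : between gHat and tsq ∘ lowEnv
  obtain ⟨φ, hφc, hφ⟩ := insertion_pm1 (usc_gHat hF hW hFW) hF.lsc_low.tsq_comp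
    (fun x => (gHat_lt_low hF hW hFW x).le)
    (neg_one_le_gHat hF hW hFW)
    (fun x => (lt_of_lt_of_le (gHat_lt_low hF hW hFW x) (tsq_lt_one _).le).le)
    (fun x => (neg_one_lt_tsq _).le)
    (fun x => (tsq_lt_one _).le)
  -- second insertion : between tsq ∘ upEnv and hHat
  obtain ⟨ψ, hψc, hψ⟩ := insertion_pm1 hF.usc_up.tsq_comp (lsc_hHat hF hW hFW)
    (fun x => (up_lt_hHat hF hW hFW x).le)
    (fun x => (neg_one_lt_tsq _).le)
    (fun x => (tsq_lt_one _).le)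
    (fun x => by
      have h1 := up_lt_hHat hF hW hFW x
      have h2 := neg_one_lt_tsq (upEnv F x)
      linarith)
    (hHat_le_one hF hW hFW)
  set c : X → ℝ := fun x => (φ x + ψ x) / 2 with hc
  have hcc : Continuous c := (hφc.add hψc).div_const 2
  have hstrict : ∀ x, gHat W F x < c x ∧ c x < hHat W F x := by
    intro x
    rcases hφ x with ⟨h1, h2⟩
    rcases hψ x with ⟨h3, h4⟩
    have hlu : tsq (lowEnv F x) ≤ tsq (upEnv F x) := tsq_strictMono.monotone (hF.low_le_up x)
    have hg1 : gHat W F x < tsq (lowEnv F x) := gHat_lt_low hF hW hFW x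
    have hh1 : tsq (upEnv F x) < hHat W F x := up_lt_hHat hF hW hFW x
    constructor
    · have : gHat W F x < ψ x := lt_of_lt_of_le (lt_of_lt_of_le hg1 hlu) h3
      simp only [hc]
      linarith
    · have : φ x < hHat W F x := lt_of_le_of_lt h2 (lt_of_le_of_lt hlu hh1)
      simp only [hc]
      linarith
  have habs : ∀ x, |c x| < 1 := by
    intro x
    rcases hstrict x with ⟨h1, h2⟩
    rw [abs_lt]
    constructor
    · exact lt_of_le_of_lt (neg_one_le_gHat hF hW hFW x) h1
    · exact lt_of_lt_of_le h2 (hHat_le_one hF hW hFW x)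
  refine ⟨fun x => c x / (1 - |c x|), ?_, ?_⟩
  · apply hcc.div (continuous_const.sub hcc.abs)
    intro x
    have := habs x
    intro hx; simp only [Pi.sub_apply] at hx; rw [sub_eq_zero] at hx; rw [← hx] at this; simp at this
  · intro x
    rw [tsq_section (habs x)]
    exact hstrict x
end Base

section Modify
variable {X : Type*} [TopologicalSpace X]

lemma isOpen_between {g h c : X → ℝ} (hg : Usc g) (hh : Lsc h) (hc : Continuous c) :
    IsOpen {x | g x < c x ∧ c x < h x} := by
  rw [isOpen_iff_forall_mem_open]
  rintro x ⟨h1, h2⟩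
  set d1 := (g x + c x) / 2
  set d2 := (c x + h x) / 2
  obtain ⟨U1, hU1, hxU1, hU1p⟩ := hg x d1 (by simp only [d1]; linarith)
  obtain ⟨U2, hU2, hxU2, hU2p⟩ := hh x d2 (by simp only [d2]; linarith)
  refine ⟨U1 ∩ U2 ∩ (c ⁻¹' Set.Ioo d1 d2), ?_, ?_, ?_⟩
  · rintro y ⟨⟨hy1, hy2⟩, hy3⟩
    exact ⟨lt_trans (hU1p y hy1) hy3.1, lt_trans hy3.2 (hU2p y hy2)⟩
  · exact (hU1.inter hU2).inter (isOpen_Ioo.preimage hc)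
  · exact ⟨⟨hxU1, hxU2⟩, by simp only [Set.mem_preimage, Set.mem_Ioo, d1, d2]; constructor <;> linarith⟩

variable [T2Space X] [NormalSpace X] {W F : Set (X × ℝ)}

/-- Chosen disjoint open separation of two distinct points. -/
noncomputable def sep (a b : X) : Set X × Set X :=
  @dite _ (a ≠ b) (Classical.dec _)
    (fun h => ⟨(t2_separation h).choose, (t2_separation h).choose_spec.choose⟩)
    (fun _ => (∅, ∅))

lemma sep_spec {a b : X} (h : a ≠ b) :
    IsOpen (sep a b).1 ∧ IsOpen (sep a b).2 ∧ a ∈ (sep a b).1 ∧ b ∈ (sep a b).2 ∧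
      Disjoint (sep a b).1 (sep a b).2 := by
  rw [sep]
  rw [dif_pos h]
  obtain ⟨h1, h2, h3, h4, h5⟩ := (t2_separation h).choose_spec.choose_spec
  exact ⟨h1, h2, h3, h4, h5⟩

lemma modifyFn (hF : IsCusco F) (hW : IsOpen W) (hFW : F ⊆ W) {f : X → ℝ}
    (hfc : Continuous f)
    (hf : ∀ x, gHat W F x < tsq (f x) ∧ tsq (f x) < hHat W F x)
    (P : Finset (X × ℝ)) (hP1 : ∀ p ∈ P, ∀ q ∈ P, p.1 = q.1 → p = q)
    (hP2 : ∀ p ∈ P, gHat W F p.1 < tsq p.2 ∧ tsq p.2 < hHat W F p.1) :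
    ∃ f2 : X → ℝ, Continuous f2 ∧
      (∀ x, gHat W F x < tsq (f2 x) ∧ tsq (f2 x) < hHat W F x) ∧
      ∀ p ∈ P, f2 p.1 = p.2 := by
  classical
  -- the admissible open set for shifting towards p
  set O : X × ℝ → Set X := fun p =>
    {x | gHat W F x < tsq (f x + (p.2 - f p.1)) ∧ tsq (f x + (p.2 - f p.1)) < hHat W F x}
    with hO
  have hOopen : ∀ p, IsOpen (O p) :=
    fun p => isOpen_between (usc_gHat hF hW hFW) (lsc_hHat hF hW hFW)
      (tsq_cont.comp (hfc.add continuous_const))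
  have hOmem : ∀ p ∈ P, p.1 ∈ O p := by
    intro p hp
    have : f p.1 + (p.2 - f p.1) = p.2 := by ring
    simp only [hO, Set.mem_setOf_eq, this]
    exact hP2 p hp
  -- neighborhoods, made pairwise disjoint
  have hfst : ∀ p ∈ P, ∀ q ∈ P, p ≠ q → p.1 ≠ q.1 := by
    intro p hp q hq hpq h1
    exact hpq (hP1 p hp q hq h1)
  set N : X × ℝ → Set X := fun p =>
    O p ∩ ⋂ q ∈ P.erase p, ((sep p.1 q.1).1 ∩ (sep q.1 p.1).2) with hN
  have hNopen : ∀ p ∈ P, IsOpen (N p) := by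
    intro p hp
    apply (hOopen p).inter
    apply isOpen_biInter_finset
    intro q hq
    rcases Finset.mem_erase.1 hq with ⟨hqp, hqP⟩
    have h1 : p.1 ≠ q.1 := hfst p hp q hqP (Ne.symm hqp)
    exact ((sep_spec h1).1).inter ((sep_spec h1.symm).2.1)
  have hNmem : ∀ p ∈ P, p.1 ∈ N p := by
    intro p hp
    refine ⟨hOmem p hp, ?_⟩
    rw [Set.mem_iInter₂]
    intro q hq
    rcases Finset.mem_erase.1 hq with ⟨hqp, hqP⟩
    have h1 : p.1 ≠ q.1 := hfst p hp q hqP (Ne.symm hqp)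
    exact ⟨(sep_spec h1).2.2.1, (sep_spec h1.symm).2.2.2.1⟩
  have hNdisj : ∀ p ∈ P, ∀ q ∈ P, p ≠ q → N p ∩ N q = ∅ := by
    intro p hp q hq hpq
    have h1 : p.1 ≠ q.1 := hfst p hp q hq hpq
    have hsub1 : N p ⊆ (sep p.1 q.1).1 := by
      intro x hx
      have := hx.2
      rw [Set.mem_iInter₂] at this
      exact (this q (Finset.mem_erase.2 ⟨fun h => hpq h.symm, hq⟩)).1
    have hsub2 : N q ⊆ (sep p.1 q.1).2 := by
      intro x hx
      have := hx.2
      rw [Set.mem_iInter₂] at this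
      exact (this p (Finset.mem_erase.2 ⟨fun h => hpq h, hp⟩)).2
    have := (sep_spec h1).2.2.2.2
    rw [Set.eq_empty_iff_forall_notMem]
    intro x hx
    exact Set.disjoint_left.1 this (hsub1 hx.1) (hsub2 hx.2)
  -- Urysohn bump functions
  have hbump : ∀ p ∈ P, ∃ lam : C(X, ℝ), Set.EqOn lam 0 ((N p)ᶜ) ∧ lam p.1 = 1 ∧
      ∀ x, lam x ∈ Set.Icc (0:ℝ) 1 := by
    intro p hp
    obtain ⟨lam, h0, h1, hm⟩ := exists_continuous_zero_one_of_isClosed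
      (hNopen p hp).isClosed_compl isClosed_singleton
      (by
        rw [Set.disjoint_left]
        intro a ha hb
        rcases hb with rfl
        exact ha (hNmem p hp))
    exact ⟨lam, h0, h1 rfl, hm⟩
  choose! lam hlam0 hlam1 hlamm using hbump
  set f2 : X → ℝ := fun x => f x + ∑ p ∈ P, lam p x * (p.2 - f p.1) with hf2
  have hf2c : Continuous f2 := by
    apply hfc.add
    apply continuous_finset_sum
    intro p hp
    exact ((lam p).continuous.mul continuous_const)
  refine ⟨f2, hf2c, ?_, ?_⟩
  · -- stays strictly inside
    intro x
    by_cases hx : ∃ p ∈ P, x ∈ N p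
    · obtain ⟨p0, hp0, hxp0⟩ := hx
      have hothers : ∀ q ∈ P, q ≠ p0 → lam q x = 0 := by
        intro q hq hqp
        apply hlam0 q hq
        intro hxq
        have := hNdisj p0 hp0 q hq (fun h => hqp h.symm)
        rw [Set.eq_empty_iff_forall_notMem] at this
        exact this x ⟨hxp0, hxq⟩
      have hsum : f2 x = f x + lam p0 x * (p0.2 - f p0.1) := by
        simp only [hf2]
        congr 1
        rw [Finset.sum_eq_single p0]
        · intro q hq hqp; rw [hothers q hq hqp]; ring
        · intro hp0'; exact absurd hp0 hp0'
      set s := lam p0 x with hs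
      have hs01 : 0 ≤ s ∧ s ≤ 1 := ⟨(hlamm p0 hp0 x).1, (hlamm p0 hp0 x).2⟩
      set cc := p0.2 - f p0.1 with hcc
      have hend : gHat W F x < tsq (f x + cc) ∧ tsq (f x + cc) < hHat W F x := hxp0.1
      have hbase := hf x
      have hmid : f2 x = f x + s * cc := hsum
      rcases le_or_gt 0 cc with hcpos | hcneg
      · have h1 : f x ≤ f2 x := by rw [hmid]; nlinarith [hs01.1]
        have h2 : f2 x ≤ f x + cc := by rw [hmid]; nlinarith [hs01.2]
        exact ⟨lt_of_lt_of_le hbase.1 (tsq_strictMono.monotone h1),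
          lt_of_le_of_lt (tsq_strictMono.monotone h2) hend.2⟩
      · have h1 : f x + cc ≤ f2 x := by rw [hmid]; nlinarith [hs01.2]
        have h2 : f2 x ≤ f x := by rw [hmid]; nlinarith [hs01.1]
        exact ⟨lt_of_lt_of_le hend.1 (tsq_strictMono.monotone h1),
          lt_of_le_of_lt (tsq_strictMono.monotone h2) hbase.2⟩
    · push_neg at hx
      have hzero : ∀ p ∈ P, lam p x = 0 := fun p hp => hlam0 p hp (hx p hp)
      have : f2 x = f x := by
        simp only [hf2]
        rw [Finset.sum_eq_zero (fun p hp => by rw [hzero p hp]; ring)]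
        ring
      rw [this]
      exact hf x
  · -- interpolation values
    intro p hp
    have hothers : ∀ q ∈ P, q ≠ p → lam q p.1 = 0 := by
      intro q hq hqp
      apply hlam0 q hq
      intro hxq
      have := hNdisj p hp q hq (fun h => hqp h.symm)
      rw [Set.eq_empty_iff_forall_notMem] at this
      exact this p.1 ⟨hNmem p hp, hxq⟩
    simp only [hf2]
    rw [Finset.sum_eq_single p]
    · rw [hlam1 p hp]; ring
    · intro q hq hqp; rw [hothers q hq hqp]; ring
    · intro hp'; exact absurd hp hp'

end Modify

section Select
variable {X : Type*} [TopologicalSpace X] [T2Space X] {W F : Set (X × ℝ)}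

lemma exists_not_mem_of_not_isolated {x : X} (hx : ¬ IsOpen ({x} : Set X)) {O : Set X}
    (hO : IsOpen O) (hxO : x ∈ O) (S : Finset X) : ∃ z ∈ O, z ∉ S := by
  classical
  by_cases hxS : x ∈ S
  · set O' := O \ (↑(S.erase x) : Set X) with hO'
    have hO'open : IsOpen O' := hO.sdiff (Set.Finite.isClosed (S.erase x).finite_toSet)
    have hxO' : x ∈ O' := ⟨hxO, by simp⟩
    have hns : ¬ (O' ⊆ {x}) := by
      intro hsub
      have heq : O' = {x} := Set.Subset.antisymm hsub (by rintro y rfl; exact hxO')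
      exact hx (heq ▸ hO'open)
    obtain ⟨z, hzO', hzx⟩ := Set.not_subset.1 hns
    refine ⟨z, hzO'.1, fun hzS => hzO'.2 ?_⟩
    simp only [Finset.coe_erase, Set.mem_diff, Finset.mem_coe]
    exact ⟨hzS, by simpa using hzx⟩
  · exact ⟨x, hxO, hxS⟩

lemma moved_point (hF : IsCusco F) (hW : IsOpen W) (hFW : F ⊆ W) {x : X} {y : ℝ}
    (hx : ¬ IsOpen ({x} : Set X)) (hy : y ∈ valuesAt F x) {Vi : Set (X × ℝ)}
    (hVo : IsOpen Vi) (hxyV : (x, y) ∈ Vi) (S : Finset X) :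
    ∃ z, z ∉ S ∧ (z, y) ∈ Vi ∧ gHat W F z < tsq y ∧ tsq y < hHat W F z := by
  obtain ⟨U, a, b, ht, hxU, ha, hb⟩ := tube_exists hF hW hFW x
  obtain ⟨u, v, hu, hv, hxu, hyv, huv⟩ := isOpen_prod_iff.1 hVo x y hxyV
  obtain ⟨z, hz, hzS⟩ := exists_not_mem_of_not_isolated hx (ht.1.inter hu) ⟨hxU, hxu⟩ S
  have hylu : lowEnv F x ≤ y ∧ y ≤ upEnv F x := by
    rw [hF.values_eq_Icc] at hy; exact ⟨hy.1, hy.2⟩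
  refine ⟨z, hzS, huv (Set.mk_mem_prod hz.2 hyv), ?_, ?_⟩
  · exact lt_of_le_of_lt (csInf_le (gHat_bddBelow z) ⟨a, ⟨U, b, ht, hz.1⟩, rfl⟩)
      (tsq_strictMono (lt_of_lt_of_le ha hylu.1))
  · exact lt_of_lt_of_le (tsq_strictMono (lt_of_le_of_lt hylu.2 hb))
      (le_csSup (hHat_bddAbove z) ⟨b, ⟨U, a, ht, hz.1⟩, rfl⟩)

lemma select_points (hF : IsCusco F) (hW : IsOpen W) (hFW : F ⊆ W)
    (hL0 : ∀ x : X, IsOpen ({x} : Set X) → ∃ y, valuesAt F x = {y})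
    {ι : Type*} [Fintype ι] (V : ι → Set (X × ℝ)) (hVo : ∀ i, IsOpen (V i))
    (hVne : ∀ i, (F ∩ V i).Nonempty) :
    ∃ P : Finset (X × ℝ), (∀ p ∈ P, ∀ q ∈ P, p.1 = q.1 → p = q) ∧
      (∀ p ∈ P, gHat W F p.1 < tsq p.2 ∧ tsq p.2 < hHat W F p.1) ∧
      ∀ i, ∃ p ∈ P, p ∈ V i := by
  classical
  have hwit : ∀ i, ∃ w : X × ℝ, w ∈ F ∧ w ∈ V i :=
    fun i => (hVne i).imp (fun w hw => ⟨hw.1, hw.2⟩)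
  choose wit hwitF hwitV using hwit
  set A : Finset X := Finset.univ.image (fun i => (wit i).1) with hA
  have main : ∀ s : Finset ι, ∃ P : Finset (X × ℝ),
      (∀ p ∈ P, ∀ q ∈ P, p.1 = q.1 → p = q) ∧
      (∀ p ∈ P, gHat W F p.1 < tsq p.2 ∧ tsq p.2 < hHat W F p.1) ∧
      (∀ p ∈ P, p.1 ∈ A → p.2 ∈ valuesAt F p.1) ∧
      (∀ i ∈ s, ∃ p ∈ P, p ∈ V i) := by
    intro s
    induction s using Finset.induction_on with
    | empty => exact ⟨∅, by simp, by simp, by simp, by simp⟩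
    | @insert i s' hnotmem ih =>
      obtain ⟨P, hP1, hP2, hP3, hP4⟩ := ih
      set x : X := (wit i).1 with hxdef
      set y : ℝ := (wit i).2 with hydef
      have hwi : wit i = (x, y) := rfl
      have hyF : y ∈ valuesAt F x := by
        show (x, y) ∈ F
        rw [← hwi]; exact hwitF i
      have hxyV : (x, y) ∈ V i := by rw [← hwi]; exact hwitV i
      have hxA : x ∈ A := Finset.mem_image.2 ⟨i, Finset.mem_univ i, rfl⟩
      by_cases hocc : ∃ p ∈ P, p.1 = x
      · obtain ⟨p', hp'P, hp'x⟩ := hocc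
        by_cases heq : p' = (x, y)
        · refine ⟨P, hP1, hP2, hP3, ?_⟩
          intro j hj
          rcases Finset.mem_insert.1 hj with rfl | hj'
          · exact ⟨p', hp'P, by rw [heq]; exact hxyV⟩
          · exact hP4 j hj'
        · have hp2 : p'.2 ≠ y := fun h => heq (Prod.ext hp'x h)
          have hp'val : p'.2 ∈ valuesAt F p'.1 := hP3 p' hp'P (hp'x ▸ hxA)
          have hnotiso : ¬ IsOpen ({x} : Set X) := by
            intro hiso
            obtain ⟨y0, hy0⟩ := hL0 x hiso
            rw [hp'x, hy0] at hp'val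
            rw [hy0] at hyF
            exact hp2 (hp'val.trans hyF.symm)
          obtain ⟨z, hzS, hzV, hz1, hz2⟩ := moved_point hF hW hFW hnotiso hyF (hVo i)
            hxyV (A ∪ P.image Prod.fst)
          have hznA : z ∉ A := fun h => hzS (Finset.mem_union_left _ h)
          have hznP : ∀ q ∈ P, q.1 ≠ z := by
            intro q hq h
            exact hzS (Finset.mem_union_right _ (Finset.mem_image.2 ⟨q, hq, h⟩))
          refine ⟨insert (z, y) P, ?_, ?_, ?_, ?_⟩
          · intro p hp q hq hpq
            rcases Finset.mem_insert.1 hp with rfl | hp'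
            · rcases Finset.mem_insert.1 hq with rfl | hq'
              · rfl
              · exact absurd hpq.symm (hznP q hq')
            · rcases Finset.mem_insert.1 hq with rfl | hq'
              · exact absurd hpq (hznP p hp')
              · exact hP1 p hp' q hq' hpq
          · intro p hp
            rcases Finset.mem_insert.1 hp with rfl | hp'
            · exact ⟨hz1, hz2⟩
            · exact hP2 p hp'
          · intro p hp
            rcases Finset.mem_insert.1 hp with rfl | hp'
            · intro h; exact absurd h hznA
            · exact hP3 p hp'
          · intro j hj
            rcases Finset.mem_insert.1 hj with rfl | hj'
            · exact ⟨(z, y), Finset.mem_insert_self _ _, hzV⟩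
            · obtain ⟨p, hpP, hpV⟩ := hP4 j hj'
              exact ⟨p, Finset.mem_insert_of_mem hpP, hpV⟩
      · push_neg at hocc
        refine ⟨insert (x, y) P, ?_, ?_, ?_, ?_⟩
        · intro p hp q hq hpq
          rcases Finset.mem_insert.1 hp with rfl | hp'
          · rcases Finset.mem_insert.1 hq with rfl | hq'
            · rfl
            · exact absurd hpq.symm (hocc q hq')
          · rcases Finset.mem_insert.1 hq with rfl | hq'
            · exact absurd hpq (hocc p hp')
            · exact hP1 p hp' q hq' hpq
        · intro p hp
          rcases Finset.mem_insert.1 hp with rfl | hp'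
          · exact between_of_mem_values hF hW hFW hyF
          · exact hP2 p hp'
        · intro p hp
          rcases Finset.mem_insert.1 hp with rfl | hp'
          · intro _; exact hyF
          · exact hP3 p hp'
        · intro j hj
          rcases Finset.mem_insert.1 hj with rfl | hj'
          · exact ⟨(x, y), Finset.mem_insert_self _ _, hxyV⟩
          · obtain ⟨p, hpP, hpV⟩ := hP4 j hj'
            exact ⟨p, Finset.mem_insert_of_mem hpP, hpV⟩
  obtain ⟨P, h1, h2, _, h4⟩ := main Finset.univ
  exact ⟨P, h1, h2, fun i => h4 i (Finset.mem_univ i)⟩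

end Select

section KeyDensity
variable {X : Type*} [TopologicalSpace X]

lemma valuesAt_graphOf (f : X → ℝ) (x : X) : valuesAt (graphOf f) x = {f x} := by
  ext y; simp [valuesAt, graphOf]

lemma isCusco_graphOf {f : X → ℝ} (hf : Continuous f) : IsCusco (graphOf f) := by
  constructor
  · intro x V hV hsub
    refine ⟨f ⁻¹' V, hV.preimage hf, ?_, ?_⟩
    · apply hsub; rw [valuesAt_graphOf]; exact rfl
    · intro u hu
      rw [valuesAt_graphOf]
      rintro y rfl
      exact hu
  · intro x
    rw [valuesAt_graphOf]
    exact ⟨⟨f x, rfl⟩, isCompact_singleton, convex_singleton _⟩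

lemma isMinimalCusco_graphOf {f : X → ℝ} (hf : Continuous f) : IsMinimalCusco (graphOf f) := by
  refine ⟨isCusco_graphOf hf, ?_⟩
  intro G hG hsub
  apply Set.Subset.antisymm hsub
  rintro ⟨x, y⟩ hxy
  obtain ⟨z, hz⟩ := (hG.2 x).1
  have hzf : z = f x := hsub hz
  have hyf : y = f x := hxy
  rw [show ((x, y) : X × ℝ) = (x, z) by rw [hyf, hzf]]
  exact hz

lemma IsMinimalCusco.isolated_singleton {F : Set (X × ℝ)} (hF : IsMinimalCusco F) :
    ∀ x : X, IsOpen ({x} : Set X) → ∃ y, valuesAt F x = {y} := by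
  intro x0 hx0
  have hFc := hF.1
  refine ⟨lowEnv F x0, ?_⟩
  classical
  set G : Set (X × ℝ) := {p ∈ F | p.1 ≠ x0} ∪ {(x0, lowEnv F x0)} with hGdef
  have hlow : (x0, lowEnv F x0) ∈ F := hFc.low_mem x0
  have hGsub : G ⊆ F := by
    rintro p (⟨hp, _⟩ | hp)
    · exact hp
    · rw [Set.mem_singleton_iff] at hp
      rw [hp]; exact hlow
  have hGvals_ne : ∀ z, z ≠ x0 → valuesAt G z = valuesAt F z := by
    intro z hz
    ext y
    constructor
    · intro hy
      rcases hy with ⟨hy1, _⟩ | hy2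
      · exact hy1
      · rw [Set.mem_singleton_iff, Prod.mk.injEq] at hy2
        exact absurd hy2.1 hz
    · intro hy
      exact Or.inl ⟨hy, hz⟩
  have hGx0 : valuesAt G x0 = {lowEnv F x0} := by
    ext y
    constructor
    · intro hy
      rcases hy with ⟨_, hne⟩ | hy2
      · exact absurd rfl hne
      · rw [Set.mem_singleton_iff, Prod.mk.injEq] at hy2
        exact hy2.2
    · rintro rfl
      exact Or.inr rfl
  have hGcusco : IsCusco G := by
    constructor
    · intro z V hV hsub
      by_cases hz : z = x0
      · subst hz
        refine ⟨{z}, hx0, rfl, ?_⟩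
        rintro u rfl
        exact hsub
      · obtain ⟨U, hU, hzU, hUp⟩ := hFc.1 z V hV (by rw [← hGvals_ne z hz]; exact hsub)
        refine ⟨U, hU, hzU, fun u hu y hy => hUp u hu ?_⟩
        exact hGsub hy
    · intro z
      by_cases hz : z = x0
      · subst hz
        rw [hGx0]
        exact ⟨⟨_, rfl⟩, isCompact_singleton, convex_singleton _⟩
      · rw [hGvals_ne z hz]
        exact hFc.2 z
  have hGF : G = F := hF.2 G hGcusco hGsub
  have hvals : valuesAt F x0 = valuesAt G x0 := by rw [hGF]
  rw [hvals]
  exact hGx0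

lemma keyLemma [T2Space X] [NormalSpace X] {F W : Set (X × ℝ)} (hF : IsCusco F)
    (hL0 : ∀ x : X, IsOpen ({x} : Set X) → ∃ y, valuesAt F x = {y})
    (hW : IsOpen W) (hFW : F ⊆ W) {ι : Type*} [Finite ι] (V : ι → Set (X × ℝ))
    (hVo : ∀ i, IsOpen (V i)) (hVne : ∀ i, (F ∩ V i).Nonempty) :
    ∃ f : X → ℝ, Continuous f ∧ graphOf f ⊆ W ∧ ∀ i, (graphOf f ∩ V i).Nonempty := by
  cases nonempty_fintype ι
  obtain ⟨f0, hf0c, hf0⟩ := base_exists hF hW hFW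
  obtain ⟨P, hP1, hP2, hP3⟩ := select_points hF hW hFW hL0 V hVo hVne
  obtain ⟨f, hfc, hf, hfP⟩ := modifyFn hF hW hFW hf0c hf0 P hP1 hP2
  refine ⟨f, hfc, ?_, ?_⟩
  · intro p hp
    have hp2 : p.2 = f p.1 := hp
    have := mem_W_of_between hF hW hFW (hf p.1).1 (hf p.1).2
    rw [← hp2] at this
    simpa using this
  · intro i
    obtain ⟨p, hpP, hpV⟩ := hP3 i
    exact ⟨p, ⟨(hfP p hpP).symm, hpV⟩⟩

end KeyDensity

section Final
open TopologicalSpace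
variable {X : Type*} [TopologicalSpace X]

lemma dense_general [T2Space X] [NormalSpace X] {S : Set (Set (X × ℝ))}
    (hSsub : ∀ F ∈ S, IsCusco F ∧ ∀ x : X, IsOpen ({x} : Set X) → ∃ y, valuesAt F x = {y})
    (hSgraph : ∀ f : X → ℝ, Continuous f → graphOf f ∈ S) :
    @Dense _ (vietoris S)
      {F : S | ∃ f : X → ℝ, Continuous f ∧ (F : Set (X × ℝ)) = graphOf f} := by
  classical
  letI : TopologicalSpace S := vietoris S
  have hb : IsTopologicalBasis ((fun f : Set (Set S) => ⋂₀ f) ''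
      {T : Set (Set S) | T.Finite ∧ T ⊆
        ({U | ∃ W : Set (X × ℝ), IsOpen W ∧ U = {A : S | (A : Set (X × ℝ)) ⊆ W}} ∪
         {U | ∃ W : Set (X × ℝ), IsOpen W ∧
            U = {A : S | ((A : Set (X × ℝ)) ∩ W).Nonempty}})}) :=
    isTopologicalBasis_of_subbasis rfl
  rw [hb.dense_iff]
  rintro o ⟨T, ⟨hTfin, hTsub⟩, rfl⟩ ⟨G, hG⟩
  rw [Set.mem_sInter] at hG
  -- choose a witness open set for each subbasic element
  set pred : Set S → Set (X × ℝ) → Prop := fun t W' =>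
    IsOpen W' ∧ (t = {A : S | (A : Set (X × ℝ)) ⊆ W'} ∨
      t = {A : S | ((A : Set (X × ℝ)) ∩ W').Nonempty}) with hpred
  have hsel : ∀ t ∈ T, ∃ W', pred t W' := by
    intro t ht
    rcases hTsub ht with ⟨W', hW', rfl⟩ | ⟨W', hW', rfl⟩
    · exact ⟨W', hW', Or.inl rfl⟩
    · exact ⟨W', hW', Or.inr rfl⟩
  set w : Set S → Set (X × ℝ) := fun t => if h : ∃ W', pred t W' then h.choose else ∅
    with hwdef
  have hw : ∀ t ∈ T, pred t (w t) := by
    intro t ht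
    have h := hsel t ht
    simp only [hwdef, dif_pos h]
    exact h.choose_spec
  set isPlus : Set S → Prop := fun t => t = {A : S | (A : Set (X × ℝ)) ⊆ w t} with hisPlus
  set Tp : Set (Set S) := {t ∈ T | isPlus t} with hTp
  set W0 : Set (X × ℝ) := ⋂₀ (w '' Tp) with hW0
  have hW0open : IsOpen W0 := by
    apply Set.Finite.isOpen_sInter ((hTfin.subset (Set.sep_subset _ _)).image w)
    rintro _ ⟨t, htp, rfl⟩
    exact (hw t htp.1).1
  have hGW0 : (G : Set (X × ℝ)) ⊆ W0 := by
    apply Set.subset_sInter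
    rintro _ ⟨t, ⟨htT, hplus⟩, rfl⟩
    have := hG t htT
    rw [hplus] at this
    exact this
  -- the minus part
  set M : Set (Set S) := {t | t ∈ T ∧ ¬ isPlus t} with hM
  haveI : Finite ↥M := (hTfin.subset (fun t ht => ht.1)).to_subtype
  set V : ↥M → Set (X × ℝ) := fun t => w ↑t with hV
  have hVo : ∀ t : ↥M, IsOpen (V t) := fun t => (hw ↑t t.2.1).1
  have hVne : ∀ t : ↥M, ((G : Set (X × ℝ)) ∩ V t).Nonempty := by
    intro t
    have hmem := hG ↑t t.2.1
    have hdis := (hw ↑t t.2.1).2.resolve_left t.2.2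
    rw [hdis] at hmem
    exact hmem
  obtain ⟨hGc, hGL0⟩ := hSsub ↑G G.2
  obtain ⟨f, hfc, hfW, hfV⟩ := keyLemma hGc hGL0 hW0open hGW0 V hVo hVne
  refine ⟨⟨graphOf f, hSgraph f hfc⟩, ?_, ⟨f, hfc, rfl⟩⟩
  rw [Set.mem_sInter]
  intro t htT
  by_cases hp : isPlus t
  · rw [hp]
    have hmem : w t ∈ w '' Tp := Set.mem_image_of_mem w ⟨htT, hp⟩
    exact fun p hp' => Set.sInter_subset_of_mem hmem (hfW hp')
  · have hdis := (hw t htT).2.resolve_left hp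
    rw [hdis]
    exact hfV ⟨t, htT, hp⟩

end Final


/-- For normal Hausdorff `X`, the continuous functions (identified with their graphs)
are dense in `(L₀(X), τ_V)` and in `(MC(X), τ_V)`. -/
theorem continuous_dense_vietoris {X : Type*} [TopologicalSpace X] [T2Space X]
    [NormalSpace X] :
    (@Dense _ (vietoris (L0Set X))
        {F : L0Set X | ∃ f : X → ℝ, Continuous f ∧ (F : Set (X × ℝ)) = graphOf f}) ∧
    (@Dense _ (vietoris (MCSet X))
        {F : MCSet X | ∃ f : X → ℝ, Continuous f ∧ (F : Set (X × ℝ)) = graphOf f}) := by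
  constructor
  · apply dense_general
    · exact fun F hF => hF
    · intro f hf
      exact ⟨isCusco_graphOf hf, fun x _ => ⟨f x, valuesAt_graphOf f x⟩⟩
  · apply dense_general
    · exact fun F hF => ⟨hF.1, hF.isolated_singleton⟩
    · intro f hf
      exact isMinimalCusco_graphOf hf
end

section
/- Let X be a normal Hausdorff space. Then the space L(X) of all cusco maps from X to ℝ, equipped with the upper Vietoris topology τ_V⁺, is first countable if and only if X is countably compact and perfectly normal. -/
open Set Topology TopologicalSpace

set_option linter.unusedSectionVars false
set_option linter.unusedVariables false

section Spike
variable {X : Type*} [TopologicalSpace X]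

/-- Auxiliary cusco: the graph of `0` together with segments `{x} × [0,t]` over `S`. -/
def spike (S : Set X) (t : ℝ) : Set (X × ℝ) :=
  {p | p.2 = 0 ∨ (p.1 ∈ S ∧ p.2 ∈ Set.Icc 0 t)}

lemma valuesAt_spike_of_mem {S : Set X} {t : ℝ} (ht : 0 ≤ t) {x : X} (hx : x ∈ S) :
    valuesAt (spike S t) x = Set.Icc 0 t := by
  ext y
  simp only [valuesAt, spike, mem_setOf_eq, hx, true_and]
  constructor
  · rintro (rfl | h)
    · exact ⟨le_rfl, ht⟩
    · exact h
  · exact Or.inr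

lemma valuesAt_spike_of_not_mem {S : Set X} {t : ℝ} {x : X} (hx : x ∉ S) :
    valuesAt (spike S t) x = {0} := by
  ext y
  simp only [valuesAt, spike, mem_setOf_eq, hx, false_and, or_false, mem_singleton_iff]

lemma spike_isCusco {S : Set X} (hS : IsClosed S) {t : ℝ} (ht : 0 ≤ t) :
    IsCusco (spike S t) := by
  constructor
  · intro x V hV hVsub
    by_cases hx : x ∈ S
    · refine ⟨univ, isOpen_univ, mem_univ _, fun u _ => ?_⟩
      rw [valuesAt_spike_of_mem ht hx] at hVsub
      by_cases hu : u ∈ S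
      · rw [valuesAt_spike_of_mem ht hu]; exact hVsub
      · rw [valuesAt_spike_of_not_mem hu]
        exact (singleton_subset_iff.2 (Set.mem_Icc.2 ⟨le_rfl, ht⟩)).trans hVsub
    · refine ⟨Sᶜ, hS.isOpen_compl, hx, fun u hu => ?_⟩
      rw [valuesAt_spike_of_not_mem hx] at hVsub
      rw [valuesAt_spike_of_not_mem hu]
      exact hVsub
  · intro x
    by_cases hx : x ∈ S
    · rw [valuesAt_spike_of_mem ht hx]
      exact ⟨⟨0, le_rfl, ht⟩, isCompact_Icc, convex_Icc 0 t⟩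
    · rw [valuesAt_spike_of_not_mem hx]
      exact ⟨⟨0, rfl⟩, isCompact_singleton, convex_singleton 0⟩

lemma spike_mono_set {S S' : Set X} (h : S ⊆ S') {t : ℝ} : spike S t ⊆ spike S' t := by
  rintro p (hp | ⟨hp1, hp2⟩)
  · exact Or.inl hp
  · exact Or.inr ⟨h hp1, hp2⟩

lemma mem_spike_of_segment {S : Set X} {t : ℝ} {x : X} (hx : x ∈ S) {y : ℝ}
    (hy : y ∈ Set.Icc 0 t) : (x, y) ∈ spike S t := Or.inr ⟨hx, hy⟩

end Spike

section Extraction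
variable {X : Type*} [TopologicalSpace X]

/-- From first countability of the upper Vietoris topology, extract a countable
"outer base" at a cusco map. -/
lemma exists_outer_base
    (h : @FirstCountableTopology _ (upperVietoris (LSet X)))
    {F : Set (X × ℝ)} (hF : IsCusco F) :
    ∃ W : ℕ → Set (X × ℝ), (∀ n, IsOpen (W n)) ∧ (∀ n, F ⊆ W n) ∧
      ∀ V : Set (X × ℝ), IsOpen V → F ⊆ V →
        ∃ n, ∀ G : Set (X × ℝ), IsCusco G → G ⊆ W n → G ⊆ V := by
  letI := upperVietoris (LSet X)
  set a : LSet X := ⟨F, hF⟩ with ha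
  haveI := h.nhds_generated_countable a
  obtain ⟨s, hs⟩ := (nhds a).exists_antitone_basis
  -- for each n, find a basic open set inside s n
  have key : ∀ n : ℕ, ∃ Wn : Set (X × ℝ), IsOpen Wn ∧ F ⊆ Wn ∧
      {A : LSet X | (A : Set (X × ℝ)) ⊆ Wn} ⊆ s n := by
    intro n
    have hsn : s n ∈ nhds a := hs.mem n
    obtain ⟨u, hus, huo, hau⟩ := mem_nhds_iff.1 hsn
    have hbasis := isTopologicalBasis_of_subbasis
      (s := {U | ∃ W : Set (X × ℝ), IsOpen W ∧ U = {A : LSet X | (A : Set (X × ℝ)) ⊆ W}})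
      (t := upperVietoris (LSet X)) rfl
    obtain ⟨v, hv, hav, hvu⟩ := hbasis.exists_subset_of_mem_open hau huo
    obtain ⟨f, ⟨hffin, hfsub⟩, rfl⟩ := hv
    choose W hWo hWe using fun (u : f) => hfsub u.2
    refine ⟨⋂ u : f, W u, ?_, ?_, ?_⟩
    · haveI : Finite f := hffin
      exact isOpen_iInter_of_finite hWo
    · intro p hp
      simp only [mem_iInter]
      intro u
      have hm : a ∈ (u : Set (LSet X)) := (mem_sInter.1 hav) _ u.2
      rw [hWe u] at hm
      exact hm hp
    · intro A hA
      refine hus (hvu ?_)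
      rw [mem_sInter]
      intro u hu
      rw [show u = {A : LSet X | (A : Set (X × ℝ)) ⊆ W ⟨u, hu⟩} from hWe ⟨u, hu⟩]
      exact hA.trans (iInter_subset _ ⟨u, hu⟩)
  choose W hWo hWF hWs using key
  refine ⟨W, hWo, hWF, fun V hVo hFV => ?_⟩
  have hVnhds : {A : LSet X | (A : Set (X × ℝ)) ⊆ V} ∈ nhds a := by
    have hop : IsOpen {A : LSet X | (A : Set (X × ℝ)) ⊆ V} :=
      TopologicalSpace.GenerateOpen.basic _ ⟨V, hVo, rfl⟩
    exact hop.mem_nhds hFV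
  obtain ⟨n, -, hns⟩ := hs.1.mem_iff.1 hVnhds
  refine ⟨n, fun G hG hGW => ?_⟩
  have : (⟨G, hG⟩ : LSet X) ∈ s n := hWs n hGW
  exact hns this

end Extraction

section Forward
variable {X : Type*} [TopologicalSpace X] [T2Space X]

lemma countablyCompact_of_firstCountable
    (h : @FirstCountableTopology _ (upperVietoris (LSet X))) : CountablyCompact X := by
  intro U hUo hUcov
  by_contra hno
  push_neg at hno
  have hx : ∀ n : ℕ, ∃ z : X, z ∉ ⋃ k ∈ Finset.range (n + 1), U k := fun n =>
    (ne_univ_iff_exists_notMem _).1 (hno (Finset.range (n + 1)))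
  choose x hxn using hx
  have hxU : ∀ k m : ℕ, x k ∈ U m → k < m := by
    intro k m hkm
    by_contra hlt
    push_neg at hlt
    exact hxn k (mem_biUnion (Finset.mem_range.2 (Nat.lt_succ_of_le hlt)) hkm)
  -- the zero cusco
  have hF0 : IsCusco (spike (∅ : Set X) 0) := spike_isCusco isClosed_empty le_rfl
  obtain ⟨W, hWo, hWF, hWb⟩ := exists_outer_base h hF0
  -- choose heights t n > 0 with {x n} × [0, t n] ⊆ W n
  have ht : ∀ n : ℕ, ∃ t : ℝ, 0 < t ∧ ∀ y ∈ Set.Icc 0 t, (x n, y) ∈ W n := by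
    intro n
    have hmem : (x n, (0 : ℝ)) ∈ W n := hWF n (Or.inl rfl)
    have hnhds : W n ∈ nhds (x n, (0 : ℝ)) := (hWo n).mem_nhds hmem
    rw [mem_nhds_prod_iff] at hnhds
    obtain ⟨u, hu, v, hv, huv⟩ := hnhds
    obtain ⟨ε, hε, hball⟩ := Metric.mem_nhds_iff.1 hv
    refine ⟨ε / 2, half_pos hε, fun y hy => ?_⟩
    apply huv
    refine ⟨mem_of_mem_nhds hu, hball ?_⟩
    rw [Metric.mem_ball, Real.dist_eq, sub_zero, abs_of_nonneg hy.1]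
    exact lt_of_le_of_lt hy.2 (half_lt_self hε)
  choose t htpos htsub using ht
  -- the bad closed set
  set C : Set (X × ℝ) := Set.range (fun n => (x n, t n)) with hC
  have hCopen : IsOpen Cᶜ := by
    rw [isOpen_iff_forall_mem_open]
    rintro ⟨z, y⟩ hzy
    obtain ⟨m, hm⟩ : ∃ m, z ∈ U m := by
      have := hUcov.symm ▸ mem_univ z
      simpa using (hUcov.symm ▸ mem_univ z : z ∈ ⋃ n, U n)
    set N : Set (X × ℝ) :=
      (U m ×ˢ (univ : Set ℝ)) ∩ ⋂ k ∈ Finset.range m, ({(x k, t k)} : Set (X × ℝ))ᶜ with hN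
    refine ⟨N, ?_, ?_, ?_⟩
    · rintro p ⟨hp1, hp2⟩ hpC
      obtain ⟨j, hj⟩ := hpC
      have hjz : x j ∈ U m := by
        have := (mem_prod.1 hp1).1
        rw [← hj] at this
        exact this
      have hjm : j < m := hxU j m hjz
      have hne := mem_iInter₂.1 hp2 j (Finset.mem_range.2 hjm)
      exact hne (by rw [← hj]; rfl)
    · refine ((hUo m).prod isOpen_univ).inter (isOpen_biInter_finset fun k _ => ?_)
      exact isOpen_compl_singleton
    · refine ⟨⟨hm, mem_univ _⟩, mem_iInter₂.2 fun k _ => ?_⟩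
      intro hk
      exact hzy ⟨k, hk.symm⟩
  -- contradiction
  have hFsub : spike (∅ : Set X) 0 ⊆ Cᶜ := by
    rintro p (hp | ⟨hp1, -⟩)
    · rintro ⟨j, hj⟩
      rw [← hj] at hp
      exact (htpos j).ne' hp
    · exact absurd hp1 (notMem_empty _)
  obtain ⟨n, hn⟩ := hWb Cᶜ hCopen hFsub
  have hGcusco : IsCusco (spike ({x n} : Set X) (t n)) :=
    spike_isCusco isClosed_singleton (htpos n).le
  have hGsub : spike ({x n} : Set X) (t n) ⊆ W n := by
    rintro ⟨z, y⟩ (hp | ⟨hp1, hp2⟩)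
    · exact hWF n (Or.inl hp)
    · rw [mem_singleton_iff] at hp1
      subst hp1
      exact htsub n y hp2
  have := hn _ hGcusco hGsub
  have hmem : (x n, t n) ∈ spike ({x n} : Set X) (t n) :=
    mem_spike_of_segment rfl ⟨(htpos n).le, le_rfl⟩
  exact this hmem ⟨n, rfl⟩

/-- Closed sets are Gδ when the hyperspace is first countable. -/
lemma isGδ_of_firstCountable
    (h : @FirstCountableTopology _ (upperVietoris (LSet X)))
    {A : Set X} (hA : IsClosed A) : IsGδ A := by
  have hFA : IsCusco (spike A 1) := spike_isCusco hA zero_le_one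
  obtain ⟨W, hWo, hWF, hWb⟩ := exists_outer_base h hFA
  set O : ℕ → Set X := fun n => {z | ∀ y ∈ Set.Icc (0 : ℝ) 1, (z, y) ∈ W n} with hO
  have hOopen : ∀ n, IsOpen (O n) := by
    intro n
    rw [isOpen_iff_forall_mem_open]
    intro z hz
    have hsub : ({z} : Set X) ×ˢ Set.Icc (0 : ℝ) 1 ⊆ W n := by
      rintro ⟨z', y⟩ ⟨hz', hy⟩
      rw [mem_singleton_iff] at hz'
      subst hz'
      exact hz y hy
    obtain ⟨u, v, huo, hvo, hzu, hIv, huv⟩ :=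
      generalized_tube_lemma isCompact_singleton isCompact_Icc (hWo n) hsub
    refine ⟨u, fun z' hz' y hy => huv ⟨hz', hIv hy⟩, huo, hzu rfl⟩
  have hAO : A = ⋂ n, O n := by
    apply Subset.antisymm
    · intro z hz
      exact mem_iInter.2 fun n y hy => hWF n (mem_spike_of_segment hz hy)
    · intro z hz
      by_contra hzA
      have hV : IsOpen (({(z, (1 : ℝ))} : Set (X × ℝ))ᶜ) := isOpen_compl_singleton
      have hFV : spike A 1 ⊆ ({(z, (1 : ℝ))} : Set (X × ℝ))ᶜ := by
        rintro ⟨z', y⟩ (hp | ⟨hp1, -⟩) hmem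
        · rw [mem_singleton_iff, Prod.mk.injEq] at hmem
          rw [hmem.2] at hp
          exact one_ne_zero hp
        · rw [mem_singleton_iff, Prod.mk.injEq] at hmem
          rw [hmem.1] at hp1
          exact hzA hp1
      obtain ⟨n, hn⟩ := hWb _ hV hFV
      have hGcusco : IsCusco (spike (A ∪ {z}) 1) :=
        spike_isCusco (hA.union isClosed_singleton) zero_le_one
      have hGsub : spike (A ∪ {z}) 1 ⊆ W n := by
        rintro ⟨z', y⟩ (hp | ⟨hp1, hp2⟩)
        · exact hWF n (Or.inl hp)
        · rcases hp1 with hp1 | hp1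
          · exact hWF n (Or.inr ⟨hp1, hp2⟩)
          · rw [mem_singleton_iff] at hp1
            subst hp1
            exact (mem_iInter.1 hz n) y hp2
      have hzG : (z, (1 : ℝ)) ∈ spike (A ∪ {z}) 1 :=
        mem_spike_of_segment (Or.inr rfl) ⟨zero_le_one, le_rfl⟩
      exact hn _ hGcusco hGsub hzG rfl
  rw [hAO]
  exact IsGδ.iInter_of_isOpen fun n => hOopen n

end Forward

section Converse
variable {X : Type*} [TopologicalSpace X]

/-- In a normal space, a closed Gδ set is a zero set. -/
lemma exists_zero_set [NormalSpace X] {C : Set X} (hC : IsClosed C) (hG : IsGδ C) :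
    ∃ h : X → ℝ, Continuous h ∧ (∀ x, h x ∈ Set.Icc (0 : ℝ) 1) ∧ ∀ x, h x = 0 ↔ x ∈ C := by
  obtain ⟨U, hUo, hCU⟩ := hG.eq_iInter_nat
  have hsub : ∀ n, C ⊆ U n := fun n => hCU.le.trans (iInter_subset U n)
  have A : ∀ n : ℕ, ∃ f : C(X, ℝ), EqOn f 0 C ∧ EqOn f 1 (U n)ᶜ ∧
      ∀ x, f x ∈ Set.Icc (0 : ℝ) 1 := by
    intro n
    apply exists_continuous_zero_one_of_isClosed hC (hUo n).isClosed_compl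
    rw [disjoint_compl_right_iff_subset]
    exact hsub n
  choose f hf0 hf1 hfr using A
  obtain ⟨u, u_pos, u_sum, u_one⟩ : ∃ u : ℕ → ℝ, (∀ i, 0 < u i) ∧ Summable u ∧ ∑' i, u i = 1 :=
    ⟨fun n => 1 / 2 / 2 ^ n, fun n => by positivity, summable_geometric_two' 1,
      tsum_geometric_two' 1⟩
  have I : ∀ n x, u n * f n x ≤ u n := fun n x =>
    mul_le_of_le_one_right (u_pos n).le (hfr n x).2
  have Inn : ∀ n x, 0 ≤ u n * f n x := fun n x => mul_nonneg (u_pos n).le (hfr n x).1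
  have S : ∀ x, Summable fun n => u n * f n x := fun x =>
    Summable.of_nonneg_of_le (Inn · x) (I · x) u_sum
  refine ⟨fun x => ∑' n, u n * f n x, ?_, fun x => ⟨?_, ?_⟩, fun x => ?_⟩
  · apply continuous_tsum (fun n => continuous_const.mul (f n).continuous) u_sum fun n x => ?_
    simpa [abs_of_nonneg, (u_pos n).le, (hfr n x).1] using I n x
  · exact tsum_nonneg (Inn · x)
  · calc ∑' n, u n * f n x ≤ ∑' n, u n := Summable.tsum_le_tsum (I · x) (S x) u_sum
    _ = 1 := u_one
  · constructor
    · intro hx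
      by_contra hxC
      obtain ⟨n, hn⟩ : ∃ n, x ∉ U n := by
        by_contra hall
        push_neg at hall
        exact hxC (hCU ▸ mem_iInter.2 hall)
      have hfn : f n x = 1 := hf1 n hn
      have hle : u n ≤ ∑' k, u k * f k x := by
        have := Summable.le_tsum (S x) n fun k _ => Inn k x
        rwa [hfn, mul_one] at this
      have hx0 : ∑' k, u k * f k x = 0 := hx
      rw [hx0] at hle
      exact absurd hle (not_le.2 (u_pos n))
    · intro hx
      have : ∀ n, u n * f n x = 0 := fun n => by rw [hf0 n hx]; simp
      simp [this]

/-- Continuous approximation from above of a bounded usc function, on a space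
where closed sets are zero-set-like (perfectly normal). -/
lemma usc_approx [NormalSpace X] (hpn : ∀ C : Set X, IsClosed C → IsGδ C)
    {g : X → ℝ} (hgusc : ∀ c : ℝ, IsOpen {x | g x < c})
    {M : ℝ} (hM0 : 0 ≤ M) (hM : ∀ x, |g x| ≤ M) :
    ∃ G : ℕ → X → ℝ, (∀ n, Continuous (G n)) ∧ (∀ n x, g x ≤ G n x) ∧
      (∀ n x, G n x ≤ M) ∧ (∀ n x, G (n + 1) x ≤ G n x) ∧
      (∀ x, ∀ ε > 0, ∃ N, ∀ n ≥ N, G n x < g x + ε) := by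
  -- zero functions for the closed sets {q ≤ g}
  have hCq : ∀ q : ℚ, IsClosed {x | (q : ℝ) ≤ g x} := by
    intro q
    have : {x | (q : ℝ) ≤ g x} = {x | g x < (q : ℝ)}ᶜ := by
      ext x; simp [not_lt]
    rw [this]
    exact (hgusc _).isClosed_compl
  have hzero : ∀ q : ℚ, ∃ h : X → ℝ, Continuous h ∧ (∀ x, h x ∈ Set.Icc (0 : ℝ) 1) ∧
      ∀ x, h x = 0 ↔ x ∈ {x | (q : ℝ) ≤ g x} :=
    fun q => exists_zero_set (hCq q) (hpn _ (hCq q))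
  choose hq hqc hqr hq0 using hzero
  -- the approximating family
  set ψ : ℚ × ℕ → X → ℝ := fun p x =>
    if -M ≤ (p.1 : ℝ) then
      min M ((p.1 : ℝ) + 2 * M * max 0 (1 - (p.2 : ℝ) * hq p.1 x))
    else M with hψ
  have hψc : ∀ p, Continuous (ψ p) := by
    intro p
    by_cases hp : -M ≤ (p.1 : ℝ)
    · simp only [hψ, if_pos hp]
      exact continuous_const.min (continuous_const.add ((continuous_const.mul
        (continuous_const.max (continuous_const.sub (continuous_const.mul (hqc p.1))))))) 
    · simp only [hψ, if_neg hp]; exact continuous_const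
  have hψge : ∀ p x, g x ≤ ψ p x := by
    rintro ⟨q, m⟩ x
    have hgM : g x ≤ M := (abs_le.1 (hM x)).2
    by_cases hp : -M ≤ (q : ℝ)
    · simp only [hψ, if_pos hp]
      by_cases hqg : (q : ℝ) ≤ g x
      · have h0 : hq q x = 0 := (hq0 q x).2 hqg
        rw [h0]
        simp only [mul_zero, sub_zero, max_eq_right zero_le_one, mul_one]
        refine le_min hgM ?_
        linarith
      · push_neg at hqg
        refine le_min hgM ?_
        have : (0:ℝ) ≤ 2 * M * max 0 (1 - (m : ℝ) * hq q x) :=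
          mul_nonneg (by linarith) (le_max_left _ _)
        linarith
    · simp only [hψ, if_neg hp]; exact hgM
  have hψle : ∀ p x, ψ p x ≤ M := by
    rintro ⟨q, m⟩ x
    by_cases hp : -M ≤ (q : ℝ)
    · simp only [hψ, if_pos hp]; exact min_le_left _ _
    · simp only [hψ, if_neg hp]; exact le_rfl
  have hψapprox : ∀ x, ∀ ε > 0, ∃ p : ℚ × ℕ, ψ p x < g x + ε := by
    intro x ε hε
    obtain ⟨q, hq1, hq2⟩ := exists_rat_btwn (lt_add_of_pos_right (g x) hε)
    have hgMx : -M ≤ g x := (abs_le.1 (hM x)).1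
    have hp : -M ≤ (q : ℝ) := hgMx.trans hq1.le
    have hx : x ∉ {x | (q : ℝ) ≤ g x} := by simp [not_le.2 hq1]
    have hqpos : 0 < hq q x := by
      rcases lt_or_eq_of_le (hqr q x).1 with h | h
      · exact h
      · exact absurd ((hq0 q x).1 h.symm) hx
    obtain ⟨m, hm⟩ := exists_nat_ge (1 / hq q x)
    refine ⟨(q, m), ?_⟩
    have hm1 : 1 ≤ (m : ℝ) * hq q x := by
      rw [div_le_iff₀ hqpos] at hm
      linarith [hm]
    simp only [hψ, if_pos hp]
    have : max 0 (1 - (m : ℝ) * hq q x) = 0 := max_eq_left (by linarith)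
    rw [this, mul_zero, add_zero]
    exact lt_of_le_of_lt (min_le_right _ _) hq2
  -- enumerate and take running minima
  let e : ℕ → ℚ × ℕ := fun n => (Denumerable.eqv (ℚ × ℕ)).symm n
  let G : ℕ → X → ℝ := fun n => Nat.rec (ψ (e 0)) (fun k Gk x => min (Gk x) (ψ (e (k + 1)) x)) n
  have hGsucc : ∀ n x, G (n + 1) x = min (G n x) (ψ (e (n + 1)) x) := fun n x => rfl
  have hGc : ∀ n, Continuous (G n) := by
    intro n
    induction n with
    | zero => exact hψc (e 0)
    | succ k ih => exact ih.min (hψc (e (k + 1)))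
  have hGge : ∀ n x, g x ≤ G n x := by
    intro n
    induction n with
    | zero => exact fun x => hψge (e 0) x
    | succ k ih => exact fun x => le_min (ih x) (hψge (e (k + 1)) x)
  have hGle : ∀ n x, G n x ≤ M := by
    intro n
    induction n with
    | zero => exact fun x => hψle (e 0) x
    | succ k ih => exact fun x => (min_le_left _ _).trans (ih x)
  have hGanti : ∀ n x, G (n + 1) x ≤ G n x := fun n x => min_le_left _ _
  have hGanti' : ∀ m n, m ≤ n → ∀ x, G n x ≤ G m x := by
    intro m n hmn
    induction n with
    | zero => intro x; rw [Nat.le_zero.1 hmn]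
    | succ k ih =>
      rcases Nat.lt_or_ge m (k+1) with h | h
      · exact fun x => (hGanti k x).trans (ih (Nat.lt_succ_iff.1 h) x)
      · have : m = k + 1 := le_antisymm hmn h
        subst this; exact fun x => le_rfl
  have hGk : ∀ k x, G k x ≤ ψ (e k) x := by
    intro k x
    cases k with
    | zero => exact le_rfl
    | succ n => exact min_le_right _ _
  refine ⟨G, hGc, hGge, hGle, hGanti, ?_⟩
  intro x ε hε
  obtain ⟨p, hp⟩ := hψapprox x ε hε
  refine ⟨Denumerable.eqv (ℚ × ℕ) p, fun n hn => ?_⟩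
  have he : e (Denumerable.eqv (ℚ × ℕ) p) = p := by simp [e]
  calc G n x ≤ G (Denumerable.eqv (ℚ × ℕ) p) x := hGanti' _ n hn x
    _ ≤ ψ (e (Denumerable.eqv (ℚ × ℕ) p)) x := hGk _ x
    _ = ψ p x := by rw [he]
    _ < g x + ε := hp

end Converse

section Converse2
variable {X : Type*} [TopologicalSpace X]

/-- In a countably compact space, a decreasing sequence of closed subsets of a bounded
strip `X × [a,b]` with empty intersection must be eventually empty. -/
lemma cc_eventually_empty (hcc : CountablyCompact X) {a b : ℝ} {C : ℕ → Set (X × ℝ)}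
    (hCc : ∀ n, IsClosed (C n)) (hmono : ∀ m n, m ≤ n → C n ⊆ C m)
    (hsub : ∀ n, C n ⊆ univ ×ˢ Set.Icc a b) (hint : ⋂ n, C n = ∅) :
    ∃ n, C n = ∅ := by
  set U : ℕ → Set X := fun n => {x | ∀ y ∈ Set.Icc a b, (x, y) ∉ C n} with hU
  have hUopen : ∀ n, IsOpen (U n) := by
    intro n
    rw [isOpen_iff_forall_mem_open]
    intro z hz
    have hsub' : ({z} : Set X) ×ˢ Set.Icc a b ⊆ (C n)ᶜ := by
      rintro ⟨z', y⟩ ⟨hz', hy⟩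
      rw [mem_singleton_iff] at hz'
      subst hz'
      exact hz y hy
    obtain ⟨u, v, huo, hvo, hzu, hIv, huv⟩ :=
      generalized_tube_lemma isCompact_singleton isCompact_Icc (hCc n).isOpen_compl hsub'
    exact ⟨u, fun z' hz' y hy => huv ⟨hz', hIv hy⟩, huo, hzu rfl⟩
  have hUcov : (⋃ n, U n) = univ := by
    rw [eq_univ_iff_forall]
    intro x
    -- slices are compact, decreasing, with empty intersection
    set D : ℕ → Set ℝ := fun n => {y ∈ Set.Icc a b | (x, y) ∈ C n} with hD
    have hDc : ∀ n, IsCompact (D n) := by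
      intro n
      apply IsCompact.of_isClosed_subset isCompact_Icc
      · exact isClosed_Icc.inter ((hCc n).preimage (Continuous.prodMk_right x))
      · exact fun y hy => hy.1
    have hDint : ⋂ n, D n = ∅ := by
      rw [eq_empty_iff_forall_notMem]
      intro y hy
      have : (x, y) ∈ ⋂ n, C n := mem_iInter.2 fun n => (mem_iInter.1 hy n).2
      rw [hint] at this
      exact this
    by_contra hx
    simp only [mem_iUnion, not_exists] at hx
    have hDne : ∀ n, (D n).Nonempty := by
      intro n
      have := hx n
      simp only [hU, mem_setOf_eq, not_forall] at this
      obtain ⟨y, hy1, hy2⟩ := this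
      rw [not_not] at hy2
      exact ⟨y, hy1, hy2⟩
    have hne := IsCompact.nonempty_iInter_of_sequence_nonempty_isCompact_isClosed D
      (fun n => fun y hy => ⟨hy.1, hmono n (n+1) (Nat.le_succ n) hy.2⟩) hDne (hDc 0)
      (fun n => (hDc n).isClosed)
    rw [hDint] at hne
    exact hne.ne_empty rfl
  obtain ⟨t, ht⟩ := hcc U hUopen hUcov
  rcases t.eq_empty_or_nonempty with rfl | htne
  · refine ⟨0, ?_⟩
    simp only [Finset.notMem_empty, iUnion_of_empty, iUnion_empty] at ht
    rw [eq_empty_iff_forall_notMem]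
    rintro ⟨x, y⟩ hxy
    have : x ∈ (∅ : Set X) := by
      rw [ht]; exact mem_univ x
    exact this
  · set N := t.max' htne with hN
    refine ⟨N, eq_empty_iff_forall_notMem.2 ?_⟩
    rintro ⟨x, y⟩ hxy
    have hx : x ∈ ⋃ n ∈ t, U n := ht ▸ mem_univ x
    obtain ⟨n, hnt, hxn⟩ := by
      simpa only [mem_iUnion, exists_prop] using hx
    have hnN : n ≤ N := t.le_max' n hnt
    have hyI : y ∈ Set.Icc a b := (hsub N hxy).2
    exact hxn y hyI (hmono n N hnN hxy)

end Converse2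

section Converse3
variable {X : Type*} [TopologicalSpace X] [NormalSpace X]

lemma firstCountable_of_cc_pn (hcc : CountablyCompact X)
    (hpn : ∀ C : Set X, IsClosed C → IsGδ C) :
    @FirstCountableTopology _ (upperVietoris (LSet X)) := by
  letI := upperVietoris (LSet X)
  constructor
  rintro ⟨F, hF⟩
  set f : X → ℝ := fun x => sInf (valuesAt F x) with hf
  set g : X → ℝ := fun x => sSup (valuesAt F x) with hg
  obtain ⟨husc, hval⟩ := hF
  have hne : ∀ x, (valuesAt F x).Nonempty := fun x => (hval x).1
  have hcomp : ∀ x, IsCompact (valuesAt F x) := fun x => (hval x).2.1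
  have hconv : ∀ x, Convex ℝ (valuesAt F x) := fun x => (hval x).2.2
  have hfmem : ∀ x, f x ∈ valuesAt F x := fun x => (hcomp x).sInf_mem (hne x)
  have hgmem : ∀ x, g x ∈ valuesAt F x := fun x => (hcomp x).sSup_mem (hne x)
  have hIcc : ∀ x, valuesAt F x = Set.Icc (f x) (g x) := by
    intro x
    apply Subset.antisymm
    · intro y hy
      exact ⟨csInf_le (hcomp x).bddBelow hy, le_csSup (hcomp x).bddAbove hy⟩
    · exact (hconv x).ordConnected.out (hfmem x) (hgmem x)
  have hfg : ∀ x, f x ≤ g x := fun x => (hIcc x ▸ hfmem x).2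
  -- usc of g, lsc of f
  have hgusc : ∀ c : ℝ, IsOpen {x | g x < c} := by
    intro c
    rw [isOpen_iff_forall_mem_open]
    intro x hx
    have hsubV : valuesAt F x ⊆ Iio c := by
      rw [hIcc x]; exact fun y hy => lt_of_le_of_lt hy.2 hx
    obtain ⟨U, hUo, hxU, hU⟩ := husc x (Iio c) isOpen_Iio hsubV
    refine ⟨U, fun u hu => ?_, hUo, hxU⟩
    exact (hU u hu) (hgmem u)
  have hflsc : ∀ c : ℝ, IsOpen {x | c < f x} := by
    intro c
    rw [isOpen_iff_forall_mem_open]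
    intro x hx
    have hsubV : valuesAt F x ⊆ Ioi c := by
      rw [hIcc x]; exact fun y hy => lt_of_lt_of_le hx hy.1
    obtain ⟨U, hUo, hxU, hU⟩ := husc x (Ioi c) isOpen_Ioi hsubV
    refine ⟨U, fun u hu => ?_, hUo, hxU⟩
    exact (hU u hu) (hfmem u)
  -- boundedness
  obtain ⟨M, hM0, hMg, hMf⟩ : ∃ M : ℝ, 0 ≤ M ∧ (∀ x, |g x| ≤ M) ∧ ∀ x, |f x| ≤ M := by
    set U : ℕ → Set X := fun n => {x | g x < n} ∩ {x | (-(n : ℝ)) < f x} with hU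
    have hUo : ∀ n, IsOpen (U n) := fun n => (hgusc _).inter (hflsc _)
    have hUcov : (⋃ n, U n) = univ := by
      rw [eq_univ_iff_forall]
      intro x
      obtain ⟨n, hn⟩ := exists_nat_gt (max (g x) (-f x))
      refine mem_iUnion.2 ⟨n, ?_, ?_⟩
      · show g x < (n : ℝ)
        exact lt_of_le_of_lt (le_max_left _ _) hn
      · show -(n : ℝ) < f x
        have h := lt_of_le_of_lt (le_max_right _ _) hn
        linarith
    obtain ⟨t, ht⟩ := hcc U hUo hUcov
    set N := t.sup id with hN
    refine ⟨N, Nat.cast_nonneg N, fun x => ?_, fun x => ?_⟩ <;>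
    · have hx : x ∈ ⋃ n ∈ t, U n := ht ▸ mem_univ x
      obtain ⟨n, hnt, hxn⟩ := by simpa only [mem_iUnion, exists_prop] using hx
      have hnN : (n : ℝ) ≤ N := Nat.cast_le.2 (Finset.le_sup (f := id) hnt)
      obtain ⟨h1, h2⟩ := hxn
      rw [abs_le]
      constructor <;> simp only [mem_setOf_eq] at h1 h2 <;> try linarith [hfg x]
    
  -- continuous approximations
  obtain ⟨G, hGc, hGge, hGle, hGanti, hGapprox⟩ := usc_approx hpn hgusc hM0 hMg
  have hnegusc : ∀ c : ℝ, IsOpen {x | -f x < c} := by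
    intro c
    have : {x | -f x < c} = {x | -c < f x} := by ext x; simp; constructor <;> intro <;> linarith
    rw [this]; exact hflsc _
  have hnegbd : ∀ x, |(-f x)| ≤ M := fun x => by rw [abs_neg]; exact hMf x
  obtain ⟨Fn', hFc', hFge', hFle', hFanti', hFapprox'⟩ := usc_approx hpn hnegusc hM0 hnegbd
  set Fn : ℕ → X → ℝ := fun n x => -Fn' n x with hFn
  have hFc : ∀ n, Continuous (Fn n) := fun n => (hFc' n).neg
  have hFle : ∀ n x, Fn n x ≤ f x := fun n x => by
    have := hFge' n x; simp only [hFn]; linarith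
  have hFge : ∀ n x, -M ≤ Fn n x := fun n x => by
    have := hFle' n x; simp only [hFn]; linarith
  have hFapprox : ∀ x, ∀ ε > 0, ∃ N, ∀ n ≥ N, f x - ε < Fn n x := by
    intro x ε hε
    obtain ⟨N, hN⟩ := hFapprox' x ε hε
    exact ⟨N, fun n hn => by have := hN n hn; simp only [hFn]; linarith⟩
  clear_value f g Fn
  -- the open sets and closed sets
  set W : ℕ → Set (X × ℝ) := fun n =>
    {p | Fn n p.1 - 1 / ((n : ℝ) + 1) < p.2 ∧ p.2 < G n p.1 + 1 / ((n : ℝ) + 1)} with hW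
  set K : ℕ → Set (X × ℝ) := fun n =>
    {p | Fn n p.1 - 1 / ((n : ℝ) + 1) ≤ p.2 ∧ p.2 ≤ G n p.1 + 1 / ((n : ℝ) + 1)} with hK
  have hWo : ∀ n, IsOpen (W n) := by
    intro n
    exact (isOpen_lt (((hFc n).comp continuous_fst).sub continuous_const) continuous_snd).inter
      (isOpen_lt continuous_snd (((hGc n).comp continuous_fst).add continuous_const))
  have hKc : ∀ n, IsClosed (K n) := by
    intro n
    exact (isClosed_le (((hFc n).comp continuous_fst).sub continuous_const) continuous_snd).inter
      (isClosed_le continuous_snd (((hGc n).comp continuous_fst).add continuous_const))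
  have hFW : ∀ n, F ⊆ W n := by
    intro n p hp
    have hpv : p.2 ∈ valuesAt F p.1 := by
      rw [valuesAt]; simp only [mem_setOf_eq]; rw [Prod.mk.eta]; exact hp
    rw [hIcc] at hpv
    have h1 : (0:ℝ) < 1 / ((n : ℝ) + 1) := by positivity
    have h2 : Fn n p.1 ≤ f p.1 := hFle n p.1
    have h3 : g p.1 ≤ G n p.1 := hGge n p.1
    have h4 : Fn n p.1 ≤ p.2 := h2.trans hpv.1
    have h5 : p.2 ≤ G n p.1 := hpv.2.trans h3
    exact ⟨lt_of_lt_of_le (sub_lt_self _ h1) h4, lt_of_le_of_lt h5 (lt_add_of_pos_right _ h1)⟩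
  have hWK : ∀ n, W n ⊆ K n := fun n p hp => ⟨hp.1.le, hp.2.le⟩
  -- finite intersections
  set W' : ℕ → Set (X × ℝ) := fun n => ⋂ k ∈ Finset.range (n + 1), W k with hW'
  set K' : ℕ → Set (X × ℝ) := fun n => ⋂ k ∈ Finset.range (n + 1), K k with hK'
  have hW'o : ∀ n, IsOpen (W' n) := fun n => isOpen_biInter_finset fun k _ => hWo k
  have hK'c : ∀ n, IsClosed (K' n) := fun n => isClosed_biInter fun k _ => hKc k
  have hFW' : ∀ n, F ⊆ W' n := fun n p hp => mem_iInter₂.2 fun k _ => hFW k hp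
  have hW'K' : ∀ n, W' n ⊆ K' n := fun n p hp =>
    mem_iInter₂.2 fun k hk => hWK k (mem_iInter₂.1 hp k hk)
  have hK'mono : ∀ m n, m ≤ n → K' n ⊆ K' m := by
    intro m n hmn p hp
    exact mem_iInter₂.2 fun k hk => mem_iInter₂.1 hp k
      (Finset.mem_range.2 (lt_of_lt_of_le (Finset.mem_range.1 hk) (by omega)))
  have hK'sub : ∀ n, K' n ⊆ univ ×ˢ Set.Icc (-(M + 1)) (M + 1) := by
    intro n p hp
    have h0 := mem_iInter₂.1 hp 0 (Finset.mem_range.2 (Nat.succ_pos n))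
    obtain ⟨h1, h2⟩ := h0
    simp only [hK, mem_setOf_eq, Nat.cast_zero, zero_add, div_one] at h1 h2
    refine ⟨mem_univ _, ?_, ?_⟩
    · have := hFge 0 p.1; linarith
    · have := hGle 0 p.1; linarith
  have hK'int : ⋂ n, K' n ⊆ F := by
    intro p hp
    have hub : p.2 ≤ g p.1 := by
      by_contra hgt
      push_neg at hgt
      set ε := p.2 - g p.1 with hε
      have hε2 : 0 < ε / 2 := by simp only [hε]; linarith
      obtain ⟨N, hN⟩ := hGapprox p.1 (ε / 2) hε2
      obtain ⟨m, hm⟩ := exists_nat_one_div_lt hε2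
      set n := max N m with hn
      have h1 : G n p.1 < g p.1 + ε / 2 := hN n (le_max_left _ _)
      have h2 : 1 / ((n : ℝ) + 1) < ε / 2 := by
        apply lt_of_le_of_lt _ hm
        apply one_div_le_one_div_of_le
        · positivity
        · have : (m : ℝ) ≤ n := Nat.cast_le.2 (le_max_right _ _)
          linarith
      have h3 := (mem_iInter₂.1 (mem_iInter.1 hp n) n (Finset.mem_range.2 (Nat.lt_succ_self n))).2
      have : p.2 < g p.1 + ε := by linarith
      simp only [hε] at this
      linarith
    have hlb : f p.1 ≤ p.2 := by
      by_contra hgt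
      push_neg at hgt
      set ε := f p.1 - p.2 with hε
      have hε2 : 0 < ε / 2 := by simp only [hε]; linarith
      obtain ⟨N, hN⟩ := hFapprox p.1 (ε / 2) hε2
      obtain ⟨m, hm⟩ := exists_nat_one_div_lt hε2
      set n := max N m with hn
      have h1 : f p.1 - ε / 2 < Fn n p.1 := hN n (le_max_left _ _)
      have h2 : 1 / ((n : ℝ) + 1) < ε / 2 := by
        apply lt_of_le_of_lt _ hm
        apply one_div_le_one_div_of_le
        · positivity
        · have : (m : ℝ) ≤ n := Nat.cast_le.2 (le_max_right _ _)
          linarith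
      have h3 := (mem_iInter₂.1 (mem_iInter.1 hp n) n (Finset.mem_range.2 (Nat.lt_succ_self n))).1
      simp only [hε] at h3 h1 h2
      linarith
    have : p.2 ∈ valuesAt F p.1 := by rw [hIcc]; exact ⟨hlb, hub⟩
    rw [valuesAt, mem_setOf_eq, Prod.mk.eta] at this
    exact this
  -- neighborhood base property in X × ℝ
  have hbase : ∀ V : Set (X × ℝ), IsOpen V → F ⊆ V → ∃ n, W' n ⊆ V := by
    intro V hVo hFV
    set C : ℕ → Set (X × ℝ) := fun n => K' n \ V with hCdef
    have hCc : ∀ n, IsClosed (C n) := fun n => (hK'c n).sdiff hVo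
    have hCm : ∀ m n, m ≤ n → C n ⊆ C m := fun m n hmn p hp =>
      ⟨hK'mono m n hmn hp.1, hp.2⟩
    have hCs : ∀ n, C n ⊆ univ ×ˢ Set.Icc (-(M + 1)) (M + 1) := fun n p hp =>
      hK'sub n hp.1
    have hCi : ⋂ n, C n = ∅ := by
      rw [eq_empty_iff_forall_notMem]
      intro p hp
      have h1 : p ∈ ⋂ n, K' n := mem_iInter.2 fun n => (mem_iInter.1 hp n).1
      have h2 : p ∉ V := (mem_iInter.1 hp 0).2
      exact h2 (hFV (hK'int h1))
    obtain ⟨n, hn⟩ := cc_eventually_empty hcc hCc hCm hCs hCi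
    refine ⟨n, fun p hp => ?_⟩
    by_contra hpV
    have : p ∈ C n := ⟨hW'K' n hp, hpV⟩
    rw [hn] at this
    exact this
  -- countable neighborhood basis in the upper Vietoris topology
  set B : ℕ → Set (LSet X) := fun n => {A : LSet X | (A : Set (X × ℝ)) ⊆ W' n} with hB
  have hBasis : (nhds (⟨F, ⟨husc, hval⟩⟩ : LSet X)).HasBasis (fun _ : ℕ => True) B := by
    rw [Filter.hasBasis_iff]
    intro s
    constructor
    · intro hs
      obtain ⟨u, hus, huo, hau⟩ := mem_nhds_iff.1 hs
      have hbasis := isTopologicalBasis_of_subbasis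
        (s := {U | ∃ W : Set (X × ℝ), IsOpen W ∧ U = {A : LSet X | (A : Set (X × ℝ)) ⊆ W}})
        (t := upperVietoris (LSet X)) rfl
      obtain ⟨v, hv, hav, hvu⟩ := hbasis.exists_subset_of_mem_open hau huo
      obtain ⟨fam, ⟨hffin, hfsub⟩, rfl⟩ := hv
      choose Wf hWfo hWfe using fun (u : fam) => hfsub u.2
      have hVo : IsOpen (⋂ u : fam, Wf u) := by
        haveI : Finite fam := hffin
        exact isOpen_iInter_of_finite hWfo
      have hFV : F ⊆ ⋂ u : fam, Wf u := by
        intro p hp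
        refine mem_iInter.2 fun u => ?_
        have hm : (⟨F, ⟨husc, hval⟩⟩ : LSet X) ∈ (u : Set (LSet X)) := (mem_sInter.1 hav) _ u.2
        rw [hWfe u] at hm
        exact hm hp
      obtain ⟨n, hn⟩ := hbase _ hVo hFV
      refine ⟨n, trivial, ?_⟩
      intro A hA
      refine hus (hvu ?_)
      rw [mem_sInter]
      intro u hu
      rw [show u = {A : LSet X | (A : Set (X × ℝ)) ⊆ Wf ⟨u, hu⟩} from hWfe ⟨u, hu⟩]
      exact (hA.trans hn).trans (iInter_subset Wf ⟨u, hu⟩)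
    · rintro ⟨n, -, hns⟩
      have hop : IsOpen (B n) := TopologicalSpace.GenerateOpen.basic _ ⟨W' n, hW'o n, rfl⟩
      exact Filter.mem_of_superset (hop.mem_nhds (hFW' n)) hns
  exact hBasis.isCountablyGenerated

end Converse3

/-- For a normal Hausdorff space `X`, the space `(L(X), τ_V⁺)` is first countable iff
`X` is countably compact and perfectly normal. -/
theorem LSet_upperVietoris_firstCountable_iff {X : Type*} [TopologicalSpace X]
    [T2Space X] [NormalSpace X] :
    @FirstCountableTopology _ (upperVietoris (LSet X)) ↔
      CountablyCompact X ∧ PerfectlyNormalSpace X := by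
  constructor
  · intro h
    refine ⟨countablyCompact_of_firstCountable h, ?_⟩
    exact { toNormalSpace := ‹NormalSpace X›
            closed_gdelta := fun C hC => isGδ_of_firstCountable h hC }
  · rintro ⟨hcc, hpn⟩
    exact firstCountable_of_cc_pn hcc fun C hC => hpn.closed_gdelta hC
end

section
/- Let X be a countably compact, perfectly normal Hausdorff space. Then the spaces L₀(X) and MC(X), each equipped with the upper Vietoris topology τ_V⁺, are first countable. -/
open Set Topology TopologicalSpace

section AuxFC
variable {X : Type*} [TopologicalSpace X]
variable {X : Type*} [TopologicalSpace X]

lemma isOpen_valuesSubset (F : Set (X × ℝ)) (hF : IsCusco F) {V : Set ℝ} (hV : IsOpen V) :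
    IsOpen {x : X | valuesAt F x ⊆ V} := by
  rw [isOpen_iff_forall_mem_open]
  intro x hx
  obtain ⟨U, hU, hxU, hUV⟩ := hF.1 x V hV hx
  exact ⟨U, fun u hu => hUV u hu, hU, hxU⟩

lemma cusco_bounded (hcc : CountablyCompact X) (F : Set (X × ℝ)) (hF : IsCusco F) :
    ∃ N : ℕ, ∀ x, valuesAt F x ⊆ Ioo (-(N : ℝ)) N := by
  set G : ℕ → Set X := fun n => {x | valuesAt F x ⊆ Ioo (-(n : ℝ)) n} with hG
  have hGopen : ∀ n, IsOpen (G n) := fun n => isOpen_valuesSubset F hF isOpen_Ioo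
  have hGcov : (⋃ n, G n) = univ := by
    ext x; simp only [mem_iUnion, mem_univ, iff_true]
    obtain ⟨hne, hcpt, -⟩ := hF.2 x
    obtain ⟨b, hb⟩ := hcpt.bddAbove
    obtain ⟨a, ha⟩ := hcpt.bddBelow
    obtain ⟨n, hn⟩ := exists_nat_gt (max |a| |b|)
    refine ⟨n, fun y hy => ?_⟩
    have h1 : a ≤ y := ha hy
    have h2 : y ≤ b := hb hy
    have hna : |a| < n := lt_of_le_of_lt (le_max_left _ _) hn
    have hnb : |b| < n := lt_of_le_of_lt (le_max_right _ _) hn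
    constructor
    · have := neg_abs_le a; linarith
    · have := le_abs_self b; linarith
  obtain ⟨t, ht⟩ := hcc G hGopen hGcov
  refine ⟨t.sup id, fun x y hy => ?_⟩
  have hx : x ∈ ⋃ n ∈ t, G n := ht ▸ mem_univ x
  simp only [mem_iUnion] at hx
  obtain ⟨n, hnt, hxn⟩ := hx
  have hle : (n : ℝ) ≤ (t.sup id : ℕ) := by exact_mod_cast Finset.le_sup (f := id) hnt
  have h := hxn hy
  exact ⟨by linarith [h.1], lt_of_lt_of_le h.2 hle⟩

lemma open_shrink [PerfectlyNormalSpace X] {S : Set X} (hS : IsOpen S) :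
    ∃ T : ℕ → Set X, (∀ m, IsOpen (T m)) ∧ (∀ m, closure (T m) ⊆ S) ∧ S ⊆ ⋃ m, T m := by
  have hgd : IsGδ Sᶜ := PerfectlyNormalSpace.closed_gdelta hS.isClosed_compl
  obtain ⟨U, hUopen, hU⟩ := hgd.eq_iInter_nat
  have hK : ∀ n, (U n)ᶜ ⊆ S := by
    intro n x hx
    by_contra hxS
    have hxc : x ∈ Sᶜ := fun h => hxS h
    rw [hU, mem_iInter] at hxc
    exact hx (hxc n)
  choose T hTopen hKT hTcl using fun n =>
    normal_exists_closure_subset (hUopen n).isClosed_compl hS (hK n)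
  refine ⟨T, hTopen, hTcl, fun x hx => ?_⟩
  have : x ∉ Sᶜ := fun h => h hx
  rw [hU, mem_iInter] at this
  push_neg at this
  obtain ⟨n, hn⟩ := this
  exact mem_iUnion.2 ⟨n, hKT n hn⟩


lemma exists_base [PerfectlyNormalSpace X] (hcc : CountablyCompact X)
    (F : Set (X × ℝ)) (hF : IsCusco F) :
    ∃ O : ℕ → Set (X × ℝ), (∀ n, IsOpen (O n)) ∧ (∀ n, F ⊆ O n) ∧
      ∀ W : Set (X × ℝ), IsOpen W → F ⊆ W → ∃ n, O n ⊆ W := by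
  obtain ⟨N, hN⟩ := cusco_bounded hcc F hF
  choose TU hTUopen hTUcl hTUcov using fun q : ℚ =>
    open_shrink (isOpen_valuesSubset F hF (isOpen_Iio (a := (q : ℝ))))
  choose TL hTLopen hTLcl hTLcov using fun q : ℚ =>
    open_shrink (isOpen_valuesSubset F hF (isOpen_Ioi (a := (q : ℝ))))
  set Q : Bool × ℚ × ℚ × ℕ → Set (X × ℝ) := fun i =>
    if i.1 then
      (if (i.2.1 : ℝ) ≤ (i.2.2.1 : ℝ) then
        (closure (TU i.2.1 i.2.2.2))ᶜ ×ˢ (univ : Set ℝ) ∪ (univ : Set X) ×ˢ Iio (i.2.2.1 : ℝ)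
      else univ)
    else
      (if (i.2.2.1 : ℝ) ≤ (i.2.1 : ℝ) then
        (closure (TL i.2.1 i.2.2.2))ᶜ ×ˢ (univ : Set ℝ) ∪ (univ : Set X) ×ˢ Ioi (i.2.2.1 : ℝ)
      else univ)
    with hQdef
  have hQopen : ∀ i, IsOpen (Q i) := by
    rintro ⟨b, q, q', m⟩
    simp only [hQdef]
    split
    · split
      · exact ((isClosed_closure.isOpen_compl).prod isOpen_univ).union (isOpen_univ.prod isOpen_Iio)
      · exact isOpen_univ
    · split
      · exact ((isClosed_closure.isOpen_compl).prod isOpen_univ).union (isOpen_univ.prod isOpen_Ioi)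
      · exact isOpen_univ
  have hFQ : ∀ i, F ⊆ Q i := by
    rintro ⟨b, q, q', m⟩ ⟨x, y⟩ hxy
    have hyv : y ∈ valuesAt F x := hxy
    simp only [hQdef]
    split
    · split
      · rename_i hb hqq
        by_cases hx : x ∈ closure (TU q m)
        · exact Or.inr ⟨mem_univ x, lt_of_lt_of_le (hTUcl q m hx hyv) hqq⟩
        · exact Or.inl ⟨hx, mem_univ y⟩
      · exact mem_univ _
    · split
      · rename_i hb hqq
        by_cases hx : x ∈ closure (TL q m)
        · exact Or.inr ⟨mem_univ x, lt_of_le_of_lt hqq (hTLcl q m hx hyv)⟩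
        · exact Or.inl ⟨hx, mem_univ y⟩
      · exact mem_univ _
  -- exclusion: points in every closure (Q i) lie in F
  have hQcl : ∀ x y, (∀ i, (x, y) ∈ closure (Q i)) → (x, y) ∈ F := by
    intro x y hp
    by_contra hyF
    obtain ⟨hne, hcpt, hconv⟩ := hF.2 x
    have hy : y ∉ valuesAt F x := hyF
    have hab : sInf (valuesAt F x) ∈ valuesAt F x := hcpt.sInf_mem hne
    have hbb : sSup (valuesAt F x) ∈ valuesAt F x := hcpt.sSup_mem hne
    have hcase : y < sInf (valuesAt F x) ∨ sSup (valuesAt F x) < y := by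
      by_contra h
      push_neg at h
      exact hy (hconv.ordConnected.out hab hbb ⟨h.1, h.2⟩)
    rcases hcase with hya | hby
    · -- lower: y < sInf, use b = false
      obtain ⟨q', hq'1, hq'2⟩ := exists_rat_btwn hya
      obtain ⟨q, hq1, hq2⟩ := exists_rat_btwn hq'2
      have hxS : x ∈ {x : X | valuesAt F x ⊆ Ioi (q : ℝ)} := fun z hz =>
        lt_of_lt_of_le hq2 (csInf_le hcpt.bddBelow hz)
      obtain ⟨m, hm⟩ := mem_iUnion.1 (hTLcov q hxS)
      have hcl := hp (false, q, q', m)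
      have hQeq : Q (false, q, q', m) =
          (closure (TL q m))ᶜ ×ˢ (univ : Set ℝ) ∪ (univ : Set X) ×ˢ Ioi (q' : ℝ) := by
        simp only [hQdef]
        simp only [Bool.false_eq_true, if_false]
        exact if_pos hq1.le
      rw [hQeq, closure_union, closure_prod_eq, closure_prod_eq, closure_univ,
        closure_compl, closure_Ioi] at hcl
      rcases hcl with h | h
      · exact h.1 (interior_maximal subset_closure (hTLopen q m) hm)
      · exact absurd h.2 (not_le.2 hq'1)
    · -- upper: sSup < y, use b = true
      obtain ⟨q, hq1, hq2⟩ := exists_rat_btwn hby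
      obtain ⟨q', hq'1, hq'2⟩ := exists_rat_btwn hq2
      have hxS : x ∈ {x : X | valuesAt F x ⊆ Iio (q : ℝ)} := fun z hz =>
        lt_of_le_of_lt (le_csSup hcpt.bddAbove hz) hq1
      obtain ⟨m, hm⟩ := mem_iUnion.1 (hTUcov q hxS)
      have hcl := hp (true, q, q', m)
      have hQeq : Q (true, q, q', m) =
          (closure (TU q m))ᶜ ×ˢ (univ : Set ℝ) ∪ (univ : Set X) ×ˢ Iio (q' : ℝ) := by
        simp only [hQdef]
        simp only [if_true]
        exact if_pos hq'1.le
      rw [hQeq, closure_union, closure_prod_eq, closure_prod_eq, closure_univ,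
        closure_compl, closure_Iio] at hcl
      rcases hcl with h | h
      · exact h.1 (interior_maximal subset_closure (hTUopen q m) hm)
      · exact absurd h.2 (not_le.2 hq'2)
  obtain ⟨e, he⟩ := exists_surjective_nat (Bool × ℚ × ℚ × ℕ)
  set O : ℕ → Set (X × ℝ) := fun n =>
    ((univ : Set X) ×ˢ Ioo (-(N : ℝ)) N) ∩ ⋂ k ∈ Finset.range (n + 1), Q (e k) with hOdef
  have hOopen : ∀ n, IsOpen (O n) :=
    fun n => (isOpen_univ.prod isOpen_Ioo).inter (isOpen_biInter_finset fun k _ => hQopen _)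
  have hFO : ∀ n, F ⊆ O n := by
    rintro n ⟨x, y⟩ hxy
    exact ⟨⟨mem_univ x, hN x hxy⟩, mem_iInter₂.2 fun k _ => hFQ _ hxy⟩
  have hOanti : ∀ {m n : ℕ}, m ≤ n → O n ⊆ O m := by
    intro m n hmn z hz
    refine ⟨hz.1, mem_iInter₂.2 fun k hk => mem_iInter₂.1 hz.2 k ?_⟩
    exact Finset.mem_range.2 (lt_of_lt_of_le (Finset.mem_range.1 hk) (by omega))
  refine ⟨O, hOopen, hFO, ?_⟩
  intro W hW hFW
  by_contra hno
  push_neg at hno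
  have hpex : ∀ n, ∃ p : X × ℝ, p ∈ O n ∧ p ∉ W := fun n => not_subset.1 (hno n)
  choose p hpO hpW using hpex
  set C : ℕ → Set (X × ℝ) := fun n => closure {z | ∃ k, n ≤ k ∧ p k = z} with hCdef
  have hCclosed : ∀ n, IsClosed (C n) := fun n => isClosed_closure
  have hCsub : ∀ n, C n ⊆ closure (O n) := fun n =>
    closure_mono (by rintro z ⟨k, hk, rfl⟩; exact hOanti hk (hpO k))
  have hCW : ∀ n, C n ⊆ Wᶜ := fun n =>
    closure_minimal (by rintro z ⟨k, hk, rfl⟩; exact hpW k) hW.isClosed_compl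
  have hCIcc : ∀ n, C n ⊆ (univ : Set X) ×ˢ Icc (-(N : ℝ)) N := fun n =>
    closure_minimal
      (by rintro z ⟨k, hk, rfl⟩
          exact ⟨mem_univ _, Ioo_subset_Icc_self (hpO k).1.2⟩)
      (isClosed_univ.prod isClosed_Icc)
  have hCanti : ∀ {m n : ℕ}, m ≤ n → C n ⊆ C m := by
    intro m n hmn
    exact closure_mono (fun z ⟨k, hk, hzk⟩ => ⟨k, le_trans hmn hk, hzk⟩)
  have hCne : ∀ n, (C n).Nonempty := fun n => ⟨p n, subset_closure ⟨n, le_refl n, rfl⟩⟩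
  -- projections are closed
  have hAclosed : ∀ n, IsClosed (Prod.fst '' C n) := by
    intro n
    rw [← isOpen_compl_iff, isOpen_iff_forall_mem_open]
    intro x hx
    have hsub : ({x} : Set X) ×ˢ Icc (-(N : ℝ)) N ⊆ (C n)ᶜ := by
      rintro ⟨x', yy⟩ ⟨hx', _⟩ hmem
      exact hx ⟨(x', yy), hmem, by simpa using hx'⟩
    obtain ⟨u, v, hu, hv, hxu, hIv, huv⟩ :=
      generalized_tube_lemma isCompact_singleton isCompact_Icc
        (hCclosed n).isOpen_compl hsub
    refine ⟨u, fun x' hx' hx'A => ?_, hu, hxu rfl⟩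
    obtain ⟨z, hzC, hz1⟩ := hx'A
    have hz2 : z.2 ∈ Icc (-(N : ℝ)) N := (hCIcc n hzC).2
    exact huv (show z ∈ u ×ˢ v from ⟨hz1 ▸ hx', hIv hz2⟩) hzC
  have hAne : ∀ n, (Prod.fst '' C n).Nonempty := fun n => (hCne n).image _
  have hAanti : ∀ {m n : ℕ}, m ≤ n → Prod.fst '' C n ⊆ Prod.fst '' C m :=
    fun hmn => image_mono (hCanti hmn)
  have hxA : ∃ x, ∀ n, x ∈ Prod.fst '' C n := by
    by_contra h
    push_neg at h
    have hcov : (⋃ n, (Prod.fst '' C n)ᶜ) = univ := by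
      ext x; simp only [mem_iUnion, mem_compl_iff, mem_univ, iff_true]
      exact h x
    obtain ⟨t, ht⟩ := hcc _ (fun n => (hAclosed n).isOpen_compl) hcov
    obtain ⟨x, hx⟩ := hAne (t.sup id)
    have hmem : x ∈ ⋃ n ∈ t, (Prod.fst '' C n)ᶜ := ht ▸ mem_univ x
    simp only [mem_iUnion] at hmem
    obtain ⟨n, hnt, hxn⟩ := hmem
    exact hxn (hAanti (Finset.le_sup (f := id) hnt) hx)
  obtain ⟨x, hx⟩ := hxA
  set E : ℕ → Set ℝ := fun n => {y | (x, y) ∈ C n} with hEdef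
  have hEclosed : ∀ n, IsClosed (E n) := fun n =>
    (hCclosed n).preimage (Continuous.prodMk_right x)
  have hEsub : ∀ n, E n ⊆ Icc (-(N : ℝ)) N := fun n y hy => (hCIcc n hy).2
  have hEne : ∀ n, (E n).Nonempty := by
    intro n
    obtain ⟨⟨z1, z2⟩, hz, rfl⟩ := hx n
    exact ⟨z2, hz⟩
  have hEdec : ∀ n, E (n + 1) ⊆ E n := fun n y hy => hCanti (Nat.le_succ n) hy
  obtain ⟨y, hy⟩ := IsCompact.nonempty_iInter_of_sequence_nonempty_isCompact_isClosed E hEdec hEne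
    (isCompact_Icc.of_isClosed_subset (hEclosed 0) (hEsub 0)) hEclosed
  have hyC : ∀ n, (x, y) ∈ C n := fun n => mem_iInter.1 hy n
  have hPQ : ∀ i, (x, y) ∈ closure (Q i) := by
    intro i
    obtain ⟨k, rfl⟩ := he i
    have h3 : O k ⊆ Q (e k) := fun z hz =>
      mem_iInter₂.1 hz.2 k (Finset.mem_range.2 (Nat.lt_succ_self k))
    exact closure_mono h3 (hCsub k (hyC k))
  exact hCW 0 (hyC 0) (hFW (hQcl x y hPQ))

end AuxFC

open Filter in
lemma firstCountable_aux {X : Type*} [TopologicalSpace X] [PerfectlyNormalSpace X]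
    (hcc : CountablyCompact X) (S : Set (Set (X × ℝ))) (hS : ∀ F ∈ S, IsCusco F) :
    @FirstCountableTopology S (upperVietoris S) := by
  letI : TopologicalSpace S := upperVietoris S
  constructor
  intro F
  obtain ⟨O, hOopen, hFO, hObase⟩ := exists_base hcc F.1 (hS F.1 F.2)
  set g : Set (Set S) :=
    {U | ∃ W : Set (X × ℝ), IsOpen W ∧ U = {A : S | (A : Set (X × ℝ)) ⊆ W}} with hg
  have hnhds : 𝓝 F = ⨅ s ∈ {s | F ∈ s ∧ s ∈ g}, 𝓟 s := nhds_generateFrom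
  have hBmem : ∀ n, {A : S | (A : Set (X × ℝ)) ⊆ O n} ∈ 𝓝 F := by
    intro n
    rw [hnhds]
    have hle : (⨅ s ∈ {s | F ∈ s ∧ s ∈ g}, 𝓟 s) ≤ 𝓟 {A : S | (A : Set (X × ℝ)) ⊆ O n} :=
      iInf₂_le _ ⟨hFO n, ⟨O n, hOopen n, rfl⟩⟩
    exact le_principal_iff.1 hle
  have key : ∀ s ∈ 𝓝 F, ∃ n, {A : S | (A : Set (X × ℝ)) ⊆ O n} ⊆ s := by
    intro s hs
    rw [hnhds] at hs
    have hdir : DirectedOn ((𝓟 · : Set S → Filter S) ⁻¹'o (· ≥ ·)) {s | F ∈ s ∧ s ∈ g} := by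
      rintro U ⟨hFU, W1, hW1, rfl⟩ V ⟨hFV, W2, hW2, rfl⟩
      refine ⟨{A : S | (A : Set (X × ℝ)) ⊆ W1 ∩ W2},
        ⟨subset_inter hFU hFV, ⟨W1 ∩ W2, hW1.inter hW2, rfl⟩⟩, ?_, ?_⟩
      · exact principal_mono.2 fun A hA => hA.trans inter_subset_left
      · exact principal_mono.2 fun A hA => hA.trans inter_subset_right
    have hne : Set.Nonempty {s | F ∈ s ∧ s ∈ g} :=
      ⟨{A : S | (A : Set (X × ℝ)) ⊆ univ}, subset_univ _, ⟨univ, isOpen_univ, rfl⟩⟩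
    rw [Filter.mem_biInf_of_directed hdir hne] at hs
    obtain ⟨U, ⟨hFU, W, hWopen, rfl⟩, hUs⟩ := hs
    obtain ⟨n, hn⟩ := hObase W hWopen hFU
    exact ⟨n, fun A hA => hUs (hA.trans hn)⟩
  have hbasis : (𝓝 F).HasBasis (fun _ : ℕ => True)
      (fun n => {A : S | (A : Set (X × ℝ)) ⊆ O n}) := by
    constructor
    intro s
    constructor
    · intro hs
      obtain ⟨n, hn⟩ := key s hs
      exact ⟨n, trivial, hn⟩
    · rintro ⟨n, -, hn⟩
      exact Filter.mem_of_superset (hBmem n) hn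
  exact hbasis.isCountablyGenerated

/-- For a countably compact, perfectly normal Hausdorff space `X`, the spaces
`(L₀(X), τ_V⁺)` and `(MC(X), τ_V⁺)` are first countable. -/
theorem firstCountable_upperVietoris {X : Type*} [TopologicalSpace X] [T2Space X]
    [PerfectlyNormalSpace X] (hcc : CountablyCompact X) :
    (@FirstCountableTopology _ (upperVietoris (L0Set X))) ∧
    (@FirstCountableTopology _ (upperVietoris (MCSet X))) := by
  exact ⟨firstCountable_aux hcc (L0Set X) (fun F hF => hF.1),
    firstCountable_aux hcc (MCSet X) (fun F hF => hF.1)⟩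
end
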